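/- arXiv:2603.26166 — 5 statements merged into one kernel-verified Lean document; each statement's English description precedes it below -/
import Mathlib

section
/- Let X be a non-negative, non-degenerate random variable with finite mean μ = E[X] > 0, let X₂ be an independent copy of X, and let λ ∈ [0,1]. Then the index I_λ admits the representation I_λ = 1 − (1/μ) ∫₀^∞ F̄_X(t⁻) F̄_{λX₂+(1−λ)μ}(t⁻) dt = (1/μ) ∫₀^∞ F_X(t⁻) F̄_{λX₂+(1−λ)μ}(t⁻) dt, where F̄(t⁻) = P(· ≥ t) denotes the left limit of the survival function at t. -/
open MeasureTheory ProbabilityTheory Set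

lemma abs_sub_eq_add_sub_two_min (a b : ℝ) : |a - b| = a + b - 2 * min a b := by
  rcases le_total a b with h | h
  · rw [min_eq_left h, abs_of_nonpos (by linarith)]; ring
  · rw [min_eq_right h, abs_of_nonneg (by linarith)]; ring

/-- Proposition 2.1. For a non-negative, non-degenerate random variable `X`
with finite mean `μ = E[X] > 0`, independent copies `X₁, X₂` of `X`, and `λ ∈ [0,1]`, the index
`I_λ = (1/(2μ)) E|(1-λ)(X₁-μ) + λ(X₁-X₂)|` satisfies
`I_λ = 1 - (1/μ) ∫₀^∞ F̄_X(t⁻) F̄_{λX₂+(1-λ)μ}(t⁻) dt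
     = (1/μ) ∫₀^∞ F_X(t⁻) F̄_{λX₂+(1-λ)μ}(t⁻) dt`. -/
theorem index_integral_representation
    {Ω : Type*} {mΩ : MeasurableSpace Ω} (P : Measure Ω) [IsProbabilityMeasure P]
    (X X₁ X₂ : Ω → ℝ)
    (hXm : Measurable X) (hX₁m : Measurable X₁) (hX₂m : Measurable X₂)
    (hXnn : ∀ ω, 0 ≤ X ω)
    (hint : Integrable X P)
    (hnondeg : ¬ ∃ c : ℝ, ∀ᵐ ω ∂P, X ω = c)
    (hid1 : IdentDistrib X₁ X P P) (hid2 : IdentDistrib X₂ X P P)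
    (hindep : IndepFun X₁ X₂ P)
    (μ : ℝ) (hμ : μ = ∫ ω, X ω ∂P) (hμpos : 0 < μ)
    (lam : ℝ) (hlam : lam ∈ Icc (0 : ℝ) 1) :
    (1 / (2 * μ)) * (∫ ω, |(1 - lam) * (X₁ ω - μ) + lam * (X₁ ω - X₂ ω)| ∂P)
      = 1 - (1 / μ) * ∫ t in Ioi (0 : ℝ),
          (P {ω | t ≤ X ω}).toReal * (P {ω | t ≤ lam * X₂ ω + (1 - lam) * μ}).toReal
    ∧ (1 / (2 * μ)) * (∫ ω, |(1 - lam) * (X₁ ω - μ) + lam * (X₁ ω - X₂ ω)| ∂P)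
      = (1 / μ) * ∫ t in Ioi (0 : ℝ),
          (P {ω | X ω < t}).toReal * (P {ω | t ≤ lam * X₂ ω + (1 - lam) * μ}).toReal := by
  obtain ⟨hlam0, hlam1⟩ := hlam
  set Y : Ω → ℝ := fun ω => lam * X₂ ω + (1 - lam) * μ with hYdef
  have hYm : Measurable Y := (hX₂m.const_mul lam).add_const _
  -- basic facts about identically distributed copies
  have key : ∀ (Z : Ω → ℝ), Measurable Z → IdentDistrib Z X P P →
      (∀ᵐ ω ∂P, 0 ≤ Z ω) ∧ Integrable Z P ∧ ∫ ω, Z ω ∂P = μ := by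
    intro Z hZm hid
    refine ⟨?_, hid.integrable_iff.mpr hint, by rw [hid.integral_eq, hμ]⟩
    have h0 : P {ω | Z ω < 0} = 0 := by
      have h1 : P {ω | Z ω < 0} = P.map Z (Iio 0) := by
        rw [Measure.map_apply hZm measurableSet_Iio]; rfl
      have h3 : P.map X (Iio 0) = P {ω | X ω < 0} := by
        rw [Measure.map_apply hXm measurableSet_Iio]; rfl
      have h4 : {ω | X ω < 0} = (∅ : Set Ω) := by
        ext ω; simp [not_lt.mpr (hXnn ω)]
      rw [h1, hid.map_eq, h3, h4, measure_empty]
    rw [ae_iff]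
    simpa [not_le] using h0
  obtain ⟨hX₁nn, hX₁int, hX₁μ⟩ := key X₁ hX₁m hid1
  obtain ⟨hX₂nn, hX₂int, hX₂μ⟩ := key X₂ hX₂m hid2
  have hYnn : ∀ᵐ ω ∂P, 0 ≤ Y ω := by
    filter_upwards [hX₂nn] with ω h
    exact add_nonneg (mul_nonneg hlam0 h) (mul_nonneg (by linarith) hμpos.le)
  have hYint : Integrable Y P := (hX₂int.const_mul lam).add (integrable_const _)
  have hYμ : ∫ ω, Y ω ∂P = μ := by
    rw [hYdef]
    rw [integral_add (hX₂int.const_mul lam) (integrable_const _), integral_const_mul,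
      hX₂μ, integral_const, probReal_univ, one_smul]
    ring
  -- the minimum
  have hMm : Measurable fun ω => min (X₁ ω) (Y ω) := hX₁m.min hYm
  have hMint : Integrable (fun ω => min (X₁ ω) (Y ω)) P := by
    have hbd : Integrable (fun ω => |X₁ ω| + |Y ω|) P := hX₁int.abs.add hYint.abs
    refine hbd.mono' hMm.aestronglyMeasurable ?_
    refine Filter.Eventually.of_forall fun ω => ?_
    show ‖min (X₁ ω) (Y ω)‖ ≤ |X₁ ω| + |Y ω|
    rw [Real.norm_eq_abs]
    rcases le_total (X₁ ω) (Y ω) with h | h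
    · rw [min_eq_left h]
      linarith [abs_nonneg (Y ω)]
    · rw [min_eq_right h]
      linarith [abs_nonneg (X₁ ω)]
  have hMnn : ∀ᵐ ω ∂P, 0 ≤ min (X₁ ω) (Y ω) := by
    filter_upwards [hX₁nn, hYnn] with ω h1 h2
    exact le_min h1 h2
  -- rewrite the absolute value
  have habs : ∀ ω, |(1 - lam) * (X₁ ω - μ) + lam * (X₁ ω - X₂ ω)|
      = X₁ ω + Y ω - 2 * min (X₁ ω) (Y ω) := by
    intro ω
    have h : (1 - lam) * (X₁ ω - μ) + lam * (X₁ ω - X₂ ω) = X₁ ω - Y ω := by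
      simp only [hYdef]; ring
    rw [h, abs_sub_eq_add_sub_two_min]
  have hE : ∫ ω, |(1 - lam) * (X₁ ω - μ) + lam * (X₁ ω - X₂ ω)| ∂P
      = μ + μ - 2 * ∫ ω, min (X₁ ω) (Y ω) ∂P := by
    have hadd : Integrable (fun ω => X₁ ω + Y ω) P := hX₁int.add hYint
    simp_rw [habs]
    rw [integral_sub hadd (hMint.const_mul 2), integral_add hX₁int hYint,
      integral_const_mul, hX₁μ, hYμ]
  -- independence of X₁ and Y
  have hindY : IndepFun X₁ Y P :=
    hindep.comp measurable_id ((measurable_id.const_mul lam).add_const ((1 - lam) * μ))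
  have hX₁tail : ∀ t : ℝ, P (X₁ ⁻¹' Ici t) = P {ω | t ≤ X ω} := by
    intro t
    rw [← Measure.map_apply hX₁m measurableSet_Ici, hid1.map_eq,
      Measure.map_apply hXm measurableSet_Ici]
    rfl
  have hmin_eq : ∀ t : ℝ, (P {ω | t ≤ min (X₁ ω) (Y ω)}).toReal
      = (P {ω | t ≤ X ω}).toReal * (P {ω | t ≤ Y ω}).toReal := by
    intro t
    have hset : {ω | t ≤ min (X₁ ω) (Y ω)} = X₁ ⁻¹' Ici t ∩ Y ⁻¹' Ici t := by
      ext ω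
      simp [le_min_iff]
    rw [hset, hindY.measure_inter_preimage_eq_mul _ _ measurableSet_Ici measurableSet_Ici,
      ENNReal.toReal_mul, hX₁tail t]
    rfl
  -- layer cake formulas
  have hlcM : ∫ ω, min (X₁ ω) (Y ω) ∂P
      = ∫ t in Ioi (0 : ℝ), (P {ω | t ≤ X ω}).toReal * (P {ω | t ≤ Y ω}).toReal := by
    rw [hMint.integral_eq_integral_meas_le hMnn]
    exact integral_congr_ae (Filter.Eventually.of_forall fun t => hmin_eq t)
  have hlcY : (μ : ℝ) = ∫ t in Ioi (0 : ℝ), (P {ω | t ≤ Y ω}).toReal := by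
    rw [← hYμ]; exact hYint.integral_eq_integral_meas_le hYnn
  -- measurability and integrability of the tail functions
  have hgA : Antitone fun t : ℝ => P {ω | t ≤ X ω} :=
    fun s t hst => measure_mono fun ω h => hst.trans h
  have hhA : Antitone fun t : ℝ => P {ω | t ≤ Y ω} :=
    fun s t hst => measure_mono fun ω h => hst.trans h
  have hg_meas : Measurable fun t : ℝ => (P {ω | t ≤ X ω}).toReal :=
    hgA.measurable.ennreal_toReal
  have hh_meas : Measurable fun t : ℝ => (P {ω | t ≤ Y ω}).toReal :=
    hhA.measurable.ennreal_toReal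
  have hh_int : Integrable (fun t : ℝ => (P {ω | t ≤ Y ω}).toReal)
      (volume.restrict (Ioi (0 : ℝ))) := by
    refine ⟨hh_meas.aestronglyMeasurable, ?_⟩
    rw [hasFiniteIntegral_iff_norm]
    have heq : ∀ t : ℝ, ENNReal.ofReal ‖(P {ω | t ≤ Y ω}).toReal‖ = P {ω | t ≤ Y ω} := by
      intro t
      rw [Real.norm_of_nonneg ENNReal.toReal_nonneg, ENNReal.ofReal_toReal (measure_ne_top P _)]
    simp_rw [heq]
    rw [← lintegral_eq_lintegral_meas_le P hYnn hYm.aemeasurable]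
    exact hYint.lintegral_lt_top
  have hgle1 : ∀ t : ℝ, (P {ω | t ≤ X ω}).toReal ≤ 1 := fun t => by
    simpa using ENNReal.toReal_mono ENNReal.one_ne_top prob_le_one
  have hgh_int : Integrable (fun t : ℝ => (P {ω | t ≤ X ω}).toReal * (P {ω | t ≤ Y ω}).toReal)
      (volume.restrict (Ioi (0 : ℝ))) := by
    refine hh_int.mono' (hg_meas.mul hh_meas).aestronglyMeasurable ?_
    refine Filter.Eventually.of_forall fun t => ?_
    rw [Real.norm_of_nonneg (mul_nonneg ENNReal.toReal_nonneg ENNReal.toReal_nonneg)]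
    calc (P {ω | t ≤ X ω}).toReal * (P {ω | t ≤ Y ω}).toReal
        ≤ 1 * (P {ω | t ≤ Y ω}).toReal :=
          mul_le_mul_of_nonneg_right (hgle1 t) ENNReal.toReal_nonneg
      _ = (P {ω | t ≤ Y ω}).toReal := one_mul _
  -- complement
  have hcompl : ∀ t : ℝ, (P {ω | X ω < t}).toReal = 1 - (P {ω | t ≤ X ω}).toReal := by
    intro t
    have hs : MeasurableSet {ω | t ≤ X ω} := hXm measurableSet_Ici
    have hc : {ω | X ω < t} = {ω | t ≤ X ω}ᶜ := by ext ω; simp [not_le]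
    rw [hc, measure_compl hs (measure_ne_top P _), measure_univ,
      ENNReal.toReal_sub_of_le prob_le_one ENNReal.one_ne_top, ENNReal.toReal_one]
  set J : ℝ := ∫ t in Ioi (0 : ℝ), (P {ω | t ≤ X ω}).toReal * (P {ω | t ≤ Y ω}).toReal with hJ
  have hfirst : (1 / (2 * μ)) * (∫ ω, |(1 - lam) * (X₁ ω - μ) + lam * (X₁ ω - X₂ ω)| ∂P)
      = 1 - (1 / μ) * J := by
    rw [hE, hlcM]
    field_simp
    ring
  constructor
  · exact hfirst
  · rw [hfirst]
    have hR : ∫ t in Ioi (0 : ℝ), (P {ω | X ω < t}).toReal * (P {ω | t ≤ Y ω}).toReal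
        = μ - J := by
      have hintegrand : ∀ t : ℝ, (P {ω | X ω < t}).toReal * (P {ω | t ≤ Y ω}).toReal
          = (P {ω | t ≤ Y ω}).toReal
            - (P {ω | t ≤ X ω}).toReal * (P {ω | t ≤ Y ω}).toReal := by
        intro t; rw [hcompl t]; ring
      simp_rw [hintegrand]
      rw [integral_sub hh_int hgh_int, ← hlcY, ← hJ]
    rw [hR]
    field_simp
end

section
/- Let X ~ Gamma(α, β) with shape α > 0 and rate β > 0, and let λ ∈ (0,1]. Then I_λ = (1−λ)^α α^{α−1} exp{−(1−λ)α} / Γ(α) + λ Γ(α,(1−λ)α)/Γ(α) − (1/α) ∫_{(1−λ)α}^∞ [Γ(α,t)/Γ(α)] · [Γ(α, (t−(1−λ)α)/λ)/Γ(α)] dt. -/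
open MeasureTheory ProbabilityTheory Set

/-- Upper incomplete gamma function `Γ(s, x) = ∫_x^∞ t^{s-1} e^{-t} dt`. -/
noncomputable def uGamma (s x : ℝ) : ℝ := ∫ t in Ioi x, t ^ (s - 1) * Real.exp (-t)


open Filter Topology
open scoped ENNReal NNReal

lemma gInt {s x : ℝ} (hs : 0 < s) (hx : 0 ≤ x) :
    IntegrableOn (fun t : ℝ => t ^ (s - 1) * Real.exp (-t)) (Ioi x) := by
  exact (((Real.GammaIntegral_convergent hs).mono_set (Ioi_subset_Ioi hx)).congr_fun
    (fun t _ => mul_comm _ _) measurableSet_Ioi)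

lemma uGamma_nonneg {s x : ℝ} (hx : 0 ≤ x) : 0 ≤ uGamma s x := by
  refine setIntegral_nonneg measurableSet_Ioi (fun t ht => ?_)
  exact mul_nonneg (Real.rpow_nonneg (hx.trans ht.le) _) (Real.exp_pos _).le

lemma uGamma_zero {s : ℝ} (hs : 0 < s) : uGamma s 0 = Real.Gamma s := by
  rw [uGamma, Real.Gamma_eq_integral hs]
  exact setIntegral_congr_fun measurableSet_Ioi (fun t _ => mul_comm _ _)

lemma uGamma_le {s x : ℝ} (hs : 0 < s) (hx : 0 ≤ x) : uGamma s x ≤ Real.Gamma s := by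
  rw [← uGamma_zero hs]
  refine setIntegral_mono_set (gInt hs le_rfl) ?_ (HasSubset.Subset.eventuallyLE (Ioi_subset_Ioi hx))
  filter_upwards [ae_restrict_mem measurableSet_Ioi] with t ht
  exact mul_nonneg (Real.rpow_nonneg ht.le _) (Real.exp_pos _).le

noncomputable def KG (s : ℝ) : ℝ → ℝ := fun x => Real.Gamma s - ∫ u in (0:ℝ)..x, u ^ (s - 1) * Real.exp (-u)

lemma KG_cont {s : ℝ} (hs : 0 < s) : Continuous (KG s) := by
  refine continuous_const.sub (intervalIntegral.continuous_primitive (fun a b => ?_) 0)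
  exact (intervalIntegral.intervalIntegrable_rpow' (by linarith)).mul_continuousOn
    (Real.continuous_exp.comp continuous_neg).continuousOn

lemma uGamma_eq_KG {s x : ℝ} (hs : 0 < s) (hx : 0 ≤ x) : uGamma s x = KG s x := by
  have h1 : Ioc 0 x ∪ Ioi x = Ioi 0 := Ioc_union_Ioi_eq_Ioi hx
  have h2 : (Real.Gamma s) = (∫ u in Ioc 0 x, u ^ (s-1) * Real.exp (-u)) + uGamma s x := by
    rw [← uGamma_zero hs, uGamma, ← h1]
    rw [setIntegral_union (Ioc_disjoint_Ioi le_rfl) measurableSet_Ioi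
      ((gInt hs le_rfl).mono_set (by rw [← h1]; exact subset_union_left)) (gInt hs hx)]
    rfl
  rw [KG, intervalIntegral.integral_of_le hx]
  linarith

lemma uGamma_succ {s x : ℝ} (hs : 0 < s) (hx : 0 ≤ x) :
    uGamma (s + 1) x = s * uGamma s x + x ^ s * Real.exp (-x) := by
  have hint1 : IntegrableOn (fun t : ℝ => t ^ s * Real.exp (-t)) (Ioi x) := by
    have := gInt (s := s + 1) (by linarith) hx
    simpa using this
  have hint2 : IntegrableOn (fun t : ℝ => s * (t ^ (s-1) * Real.exp (-t))) (Ioi x) :=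
    (gInt hs hx).const_mul s
  have key : ∫ t in Ioi x, (t ^ s * Real.exp (-t) - s * (t ^ (s-1) * Real.exp (-t)))
      = 0 - (-(x ^ s * Real.exp (-x))) := by
    have := integral_Ioi_of_hasDerivAt_of_tendsto
      (f := fun t : ℝ => -(t ^ s * Real.exp (-t)))
      (f' := fun t : ℝ => t ^ s * Real.exp (-t) - s * (t ^ (s-1) * Real.exp (-t)))
      (a := x) (m := 0) ?_ ?_ (hint1.sub hint2) ?_
    · exact this
    · refine ContinuousWithinAt.neg (ContinuousWithinAt.mul ?_ ?_)
      · exact (Real.continuousAt_rpow_const x s (Or.inr hs.le)).continuousWithinAt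
      · exact (Real.continuous_exp.comp continuous_neg).continuousWithinAt
    · intro t ht
      have ht0 : 0 < t := lt_of_le_of_lt hx ht
      have h1 : HasDerivAt (fun t : ℝ => t ^ s) (s * t ^ (s - 1)) t :=
        Real.hasDerivAt_rpow_const (Or.inl ht0.ne')
      have h2 : HasDerivAt (fun t : ℝ => Real.exp (-t)) (-Real.exp (-t)) t := by
        simpa using (hasDerivAt_neg t).exp
      have := (h1.mul h2).neg
      convert this using 1
      · rfl
      ring
    · have := tendsto_rpow_mul_exp_neg_mul_atTop_nhds_zero s 1 one_pos
      simp only [neg_mul, one_mul] at this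
      simpa using this.neg
  have hsplit : ∫ t in Ioi x, (t ^ s * Real.exp (-t) - s * (t ^ (s-1) * Real.exp (-t)))
      = (∫ t in Ioi x, t ^ s * Real.exp (-t)) - ∫ t in Ioi x, s * (t ^ (s-1) * Real.exp (-t)) :=
    integral_sub hint1 hint2
  have hu1 : uGamma (s+1) x = ∫ t in Ioi x, t ^ s * Real.exp (-t) := by
    simp [uGamma]
  rw [hu1, integral_const_mul] at *
  have : uGamma s x = ∫ t in Ioi x, t ^ (s-1) * Real.exp (-t) := rfl
  rw [key] at hsplit
  rw [this]
  linarith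

lemma gMeas (s : ℝ) : Measurable (fun t : ℝ => t ^ (s - 1) * Real.exp (-t)) :=
  (measurable_id.pow_const _).mul (measurable_neg.exp)


lemma lint_uGamma {s x : ℝ} (hs : 0 < s) (hx : 0 ≤ x) :
    ∫⁻ t in Ioi x, ENNReal.ofReal (uGamma s t)
      = ENNReal.ofReal (∫ u in Ioi x, (u ^ (s - 1) * Real.exp (-u)) * (u - x)) := by
  set G : ℝ → ℝ≥0∞ := fun u => ENNReal.ofReal (u ^ (s - 1) * Real.exp (-u)) with hG
  have hGmeas : Measurable G := ENNReal.measurable_ofReal.comp (gMeas s)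
  set h : ℝ × ℝ → ℝ≥0∞ := fun p => {q : ℝ × ℝ | q.1 < q.2}.indicator (fun q => G q.2) p with hh
  have hmeas_set : MeasurableSet {q : ℝ × ℝ | q.1 < q.2} := measurableSet_lt measurable_fst measurable_snd
  have hhmeas : Measurable h := (hGmeas.comp measurable_snd).indicator hmeas_set
  have step1 : ∫⁻ t in Ioi x, ENNReal.ofReal (uGamma s t)
      = ∫⁻ t in Ioi x, ∫⁻ u, h (t, u) := by
    refine setLIntegral_congr_fun_ae measurableSet_Ioi (ae_of_all _ (fun t ht => ?_))
    have h1 : ENNReal.ofReal (uGamma s t) = ∫⁻ u in Ioi t, G u := by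
      rw [hG, uGamma]
      refine ofReal_integral_eq_lintegral_ofReal (gInt hs (hx.trans ht.le)) ?_
      filter_upwards [ae_restrict_mem measurableSet_Ioi] with u hu
      exact mul_nonneg (Real.rpow_nonneg ((hx.trans ht.le).trans hu.le) _) (Real.exp_pos _).le
    rw [h1, ← lintegral_indicator measurableSet_Ioi]
    refine lintegral_congr (fun u => ?_)
    simp only [hh, indicator, mem_Ioi, mem_setOf_eq]
  have step2 : ∫⁻ t in Ioi x, ∫⁻ u, h (t, u)
      = ∫⁻ u, ∫⁻ t in Ioi x, h (t, u) := by
    exact lintegral_lintegral_swap (hhmeas.aemeasurable)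
  have step3 : ∀ u : ℝ, ∫⁻ t in Ioi x, h (t, u) = G u * ENNReal.ofReal (u - x) := by
    intro u
    have : ∀ t : ℝ, h (t, u) = (Iio u).indicator (fun _ => G u) t := by
      intro t; simp only [hh, indicator, mem_setOf_eq, mem_Iio]
    simp_rw [this]
    rw [lintegral_indicator measurableSet_Iio, Measure.restrict_restrict measurableSet_Iio,
      setLIntegral_const, Iio_inter_Ioi, Real.volume_Ioo]
  simp_rw [step1, step2, step3]
  have step4 : ∫⁻ u, G u * ENNReal.ofReal (u - x)
      = ∫⁻ u in Ioi x, G u * ENNReal.ofReal (u - x) := by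
    rw [← lintegral_add_compl _ (measurableSet_Ioi (a := x))]
    have : ∫⁻ u in (Ioi x)ᶜ, G u * ENNReal.ofReal (u - x) = 0 := by
      rw [setLIntegral_congr_fun_ae measurableSet_Ioi.compl (ae_of_all _ (fun u hu => ?_)), lintegral_zero]
      have : u ≤ x := by simpa using hu
      simp [ENNReal.ofReal_eq_zero.mpr (by linarith : u - x ≤ 0)]
    rw [this, add_zero]
  rw [step4]
  have step5 : ∫⁻ u in Ioi x, G u * ENNReal.ofReal (u - x)
      = ∫⁻ u in Ioi x, ENNReal.ofReal ((u ^ (s - 1) * Real.exp (-u)) * (u - x)) := by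
    refine setLIntegral_congr_fun_ae measurableSet_Ioi (ae_of_all _ (fun u hu => ?_))
    rw [hG]
    exact (ENNReal.ofReal_mul (mul_nonneg (Real.rpow_nonneg (hx.trans hu.le) _) (Real.exp_pos _).le)).symm
  rw [step5, ← ofReal_integral_eq_lintegral_ofReal]
  · have h1 : IntegrableOn (fun u : ℝ => u ^ s * Real.exp (-u) - x * (u ^ (s-1) * Real.exp (-u))) (Ioi x) := by
      have := gInt (s := s + 1) (by linarith) hx
      simp only [add_sub_cancel_right] at this
      exact this.sub ((gInt hs hx).const_mul x)
    refine h1.congr_fun (fun u hu => ?_) measurableSet_Ioi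
    have hu0 : 0 < u := lt_of_le_of_lt hx hu
    have h2 : u ^ (s - 1) * u = u ^ s := by
      rw [Real.rpow_sub_one hu0.ne', div_mul_cancel₀ _ hu0.ne']
    beta_reduce; rw [← h2]; ring
  · filter_upwards [ae_restrict_mem measurableSet_Ioi] with u hu
    exact mul_nonneg (mul_nonneg (Real.rpow_nonneg (hx.trans hu.le) _) (Real.exp_pos _).le)
      (by linarith [mem_Ioi.mp hu])

lemma uGamma_aesm {s x : ℝ} (hs : 0 < s) (hx : 0 ≤ x) :
    AEStronglyMeasurable (fun t => uGamma s t) (volume.restrict (Ioi x)) := by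
  refine ((KG_cont hs).aestronglyMeasurable).restrict.congr ?_
  filter_upwards [ae_restrict_mem measurableSet_Ioi] with t ht
  exact (uGamma_eq_KG hs (hx.trans ht.le)).symm

lemma uGamma_ae_nonneg {s x : ℝ} (hx : 0 ≤ x) :
    0 ≤ᵐ[volume.restrict (Ioi x)] (fun t => uGamma s t) := by
  filter_upwards [ae_restrict_mem measurableSet_Ioi] with t ht
  exact uGamma_nonneg (hx.trans ht.le)

lemma integrableOn_uGamma {s x : ℝ} (hs : 0 < s) (hx : 0 ≤ x) :
    IntegrableOn (fun t => uGamma s t) (Ioi x) := by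
  refine ⟨uGamma_aesm hs hx, ?_⟩
  rw [hasFiniteIntegral_iff_ofReal (uGamma_ae_nonneg hx), lint_uGamma hs hx]
  exact ENNReal.ofReal_lt_top

lemma integral_uGamma_Ioi {s x : ℝ} (hs : 0 < s) (hx : 0 ≤ x) :
    ∫ t in Ioi x, uGamma s t = uGamma (s + 1) x - x * uGamma s x := by
  rw [integral_eq_lintegral_of_nonneg_ae (uGamma_ae_nonneg hx) (uGamma_aesm hs hx),
    lint_uGamma hs hx, ENNReal.toReal_ofReal]
  · have e1 : ∫ u in Ioi x, (u ^ (s - 1) * Real.exp (-u)) * (u - x)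
        = ∫ u in Ioi x, (u ^ s * Real.exp (-u) - x * (u ^ (s - 1) * Real.exp (-u))) := by
      refine setIntegral_congr_fun measurableSet_Ioi (fun u hu => ?_)
      have hu0 : 0 < u := lt_of_le_of_lt hx hu
      have h2 : u ^ (s - 1) * u = u ^ s := by
        rw [Real.rpow_sub_one hu0.ne', div_mul_cancel₀ _ hu0.ne']
      rw [← h2]; ring
    have hint1 : IntegrableOn (fun u : ℝ => u ^ s * Real.exp (-u)) (Ioi x) := by
      have := gInt (s := s + 1) (by linarith) hx
      simpa using this
    rw [e1, integral_sub hint1 ((gInt hs hx).const_mul x), integral_const_mul]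
    have h3 : uGamma (s + 1) x = ∫ u in Ioi x, u ^ s * Real.exp (-u) := by
      simp [uGamma]
    rw [h3]; rfl
  · refine setIntegral_nonneg measurableSet_Ioi (fun u hu => ?_)
    exact mul_nonneg (mul_nonneg (Real.rpow_nonneg (hx.trans hu.le) _) (Real.exp_pos _).le)
      (by linarith [mem_Ioi.mp hu])

variable {α β : ℝ}

lemma gammaInt (hα : 0 < α) (hβ : 0 < β) {a : ℝ} (ha : 0 ≤ a) :
    IntegrableOn (fun x : ℝ => x ^ (α - 1) * Real.exp (-(β * x))) (Ioi a) := by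
  have h := (gInt hα (by positivity : (0:ℝ) ≤ β * a))
  have h2 := (integrableOn_Ioi_comp_mul_left_iff
    (fun t : ℝ => t ^ (α - 1) * Real.exp (-t)) a hβ).mpr h
  refine IntegrableOn.congr_fun (Integrable.const_mul h2 ((β ^ (α - 1))⁻¹) : IntegrableOn _ _ _) (fun x hx => ?_) measurableSet_Ioi
  have hx0 : 0 < x := lt_of_le_of_lt ha hx
  have hbne : (β : ℝ) ^ (α - 1) ≠ 0 := (Real.rpow_pos_of_pos hβ _).ne'
  rw [Real.mul_rpow hβ.le hx0.le]
  field_simp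

/-- survival function of the gamma measure -/
lemma gamma_Ioi (hα : 0 < α) (hβ : 0 < β) {a : ℝ} (ha : 0 ≤ a) :
    gammaMeasure α β (Ioi a) = ENNReal.ofReal (uGamma α (β * a) / Real.Gamma α) := by
  rw [gammaMeasure, withDensity_apply _ measurableSet_Ioi]
  have h1 : ∫⁻ x in Ioi a, gammaPDF α β x
      = ∫⁻ x in Ioi a, ENNReal.ofReal (β ^ α / Real.Gamma α * (x ^ (α - 1) * Real.exp (-(β * x)))) := by
    refine setLIntegral_congr_fun_ae measurableSet_Ioi (ae_of_all _ (fun x hx => ?_))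
    rw [gammaPDF_of_nonneg (ha.trans hx.le), mul_assoc]
  rw [h1, ← ofReal_integral_eq_lintegral_ofReal ((gammaInt hα hβ ha).const_mul _)]
  · congr 1
    rw [integral_const_mul]
    have h2 : ∫ x in Ioi a, x ^ (α - 1) * Real.exp (-(β * x))
        = β⁻¹ • ((β ^ (α-1))⁻¹ • ∫ t in Ioi (β * a), t ^ (α - 1) * Real.exp (-t)) := by
      rw [← integral_smul, ← integral_comp_mul_left_Ioi _ _ hβ]
      refine setIntegral_congr_fun measurableSet_Ioi (fun x hx => ?_)
      have hx0 : 0 < x := lt_of_le_of_lt ha hx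
      have hbne : (β : ℝ) ^ (α - 1) ≠ 0 := (Real.rpow_pos_of_pos hβ _).ne'
      rw [Real.mul_rpow hβ.le hx0.le, smul_eq_mul]
      field_simp
    rw [h2, smul_eq_mul, smul_eq_mul]
    have hΓ : 0 < Real.Gamma α := Real.Gamma_pos_of_pos hα
    have hbne : (β : ℝ) ^ (α - 1) ≠ 0 := (Real.rpow_pos_of_pos hβ _).ne'
    have : uGamma α (β * a) = ∫ t in Ioi (β * a), t ^ (α - 1) * Real.exp (-t) := rfl
    have hane : (β : ℝ) ^ α ≠ 0 := (Real.rpow_pos_of_pos hβ _).ne'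
    rw [← this, Real.rpow_sub hβ, Real.rpow_one]
    field_simp
  · filter_upwards [ae_restrict_mem measurableSet_Ioi] with x hx
    have hx0 : 0 < x := lt_of_le_of_lt ha hx
    have hΓ : 0 < Real.Gamma α := Real.Gamma_pos_of_pos hα
    positivity

lemma gamma_singleton (r : ℝ) : gammaMeasure α β {r} = 0 :=
  withDensity_absolutelyContinuous volume (gammaPDF α β) (Real.volume_singleton)

lemma gamma_Iio_nonpos {r : ℝ} (hr : r ≤ 0) : gammaMeasure α β (Iio r) = 0 := by
  rw [gammaMeasure, withDensity_apply _ measurableSet_Iio]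
  exact lintegral_gammaPDF_of_nonpos hr

lemma gamma_Iio (hα : 0 < α) (hβ : 0 < β) {r : ℝ} (hr : 0 ≤ r) :
    gammaMeasure α β (Iio r) = ENNReal.ofReal (1 - uGamma α (β * r) / Real.Gamma α) := by
  have hP : IsProbabilityMeasure (gammaMeasure α β) := isProbabilityMeasure_gammaMeasure hα hβ
  have hIci : gammaMeasure α β (Ici r) = ENNReal.ofReal (uGamma α (β * r) / Real.Gamma α) := by
    rw [← measure_congr (Ioi_ae_eq_Ici' (gamma_singleton r))]
    exact gamma_Ioi hα hβ hr
  have hcompl := measure_compl (μ := gammaMeasure α β) (measurableSet_Ici (a := r)) (measure_ne_top _ _)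
  rw [compl_Ici] at hcompl
  rw [hcompl, hIci, measure_univ, ENNReal.ofReal_sub _ (div_nonneg (uGamma_nonneg (by positivity))
    (Real.Gamma_pos_of_pos hα).le), ENNReal.ofReal_one]

lemma gamma_lint_id (hα : 0 < α) (hβ : 0 < β) :
    ∫⁻ x, ENNReal.ofReal x ∂(gammaMeasure α β) = ENNReal.ofReal (α / β) := by
  have hpdf : gammaPDF α β = fun x => ENNReal.ofReal (gammaPDFReal α β x) := rfl
  rw [gammaMeasure, hpdf, lintegral_withDensity_eq_lintegral_mul volume
    (measurable_gammaPDFReal α β).ennreal_ofReal ENNReal.measurable_ofReal]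
  simp only [Pi.mul_apply]
  have hpdf2 : ∀ x, ENNReal.ofReal (gammaPDFReal α β x) = gammaPDF α β x := fun _ => rfl
  simp_rw [hpdf2]
  have key : ∀ x : ℝ, (gammaPDF α β x * ENNReal.ofReal x)
      = (Ioi (0:ℝ)).indicator (fun x => ENNReal.ofReal (β ^ α / Real.Gamma α * (x ^ ((α+1) - 1) * Real.exp (-(β * x))))) x := by
    intro x
    rcases le_or_gt x 0 with hx | hx
    · rcases lt_or_eq_of_le hx with hx' | hx'
      · rw [gammaPDF_of_neg hx', indicator_of_notMem (by simp [hx.not_gt])]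
        simp
      · rw [indicator_of_notMem (by simp [hx.not_gt])]
        simp [← hx']
    · rw [gammaPDF_of_nonneg hx.le, indicator_of_mem (mem_Ioi.mpr hx),
        ← ENNReal.ofReal_mul (le_of_lt (by have hΓ : 0 < Real.Gamma α := Real.Gamma_pos_of_pos hα; positivity))]
      congr 1
      have h2 : x ^ ((α + 1) - 1) = x ^ (α - 1) * x := by
        rw [add_sub_cancel_right, Real.rpow_sub_one hx.ne', div_mul_cancel₀ _ hx.ne']
      rw [h2]; ring
  simp_rw [key]
  rw [lintegral_indicator measurableSet_Ioi,
    ← ofReal_integral_eq_lintegral_ofReal ((gammaInt (by linarith : (0:ℝ) < α + 1) hβ le_rfl).const_mul _)]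
  · congr 1
    rw [integral_const_mul, Real.integral_rpow_mul_exp_neg_mul_Ioi (by linarith : (0:ℝ) < α + 1) hβ,
      Real.Gamma_add_one hα.ne']
    have hΓ : 0 < Real.Gamma α := Real.Gamma_pos_of_pos hα
    have h1 : ((1:ℝ) / β) ^ (α + 1) = (β ^ α * β)⁻¹ := by
      rw [Real.div_rpow zero_le_one hβ.le, Real.one_rpow, one_div, Real.rpow_add hβ, Real.rpow_one]
    have hbne : (β:ℝ) ^ α ≠ 0 := (Real.rpow_pos_of_pos hβ _).ne'
    rw [h1]
    field_simp
  · filter_upwards [ae_restrict_mem measurableSet_Ioi] with x hx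
    have hx0 : 0 < x := hx
    have hΓ : 0 < Real.Gamma α := Real.Gamma_pos_of_pos hα
    positivity

lemma gamma_ae_nonneg (hα : 0 < α) (hβ : 0 < β) : ∀ᵐ x ∂(gammaMeasure α β), 0 ≤ x := by
  rw [ae_iff]
  have : {x : ℝ | ¬ 0 ≤ x} = Iio 0 := by ext x; simp
  rw [this]
  exact gamma_Iio_nonpos le_rfl

lemma gamma_integrable_id (hα : 0 < α) (hβ : 0 < β) : Integrable id (gammaMeasure α β) := by
  refine ⟨aestronglyMeasurable_id, ?_⟩
  show HasFiniteIntegral (fun x => x) _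
  rw [hasFiniteIntegral_iff_ofReal (gamma_ae_nonneg hα hβ), gamma_lint_id hα hβ]
  exact ENNReal.ofReal_lt_top

lemma gamma_mean (hα : 0 < α) (hβ : 0 < β) : ∫ x, x ∂(gammaMeasure α β) = α / β := by
  rw [integral_eq_lintegral_of_nonneg_ae (gamma_ae_nonneg hα hβ) aestronglyMeasurable_id,
    gamma_lint_id hα hβ, ENNReal.toReal_ofReal (by positivity)]

lemma key_lintegral (hα : 0 < α) (hβ : 0 < β) (c lam : ℝ) (hc : 0 ≤ c) (hlam : 0 < lam) :
    ∫⁻ p : ℝ × ℝ, ENNReal.ofReal (max (p.1 - lam * p.2 - c) 0)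
        ∂((gammaMeasure α β).prod (gammaMeasure α β))
      = ∫⁻ v in Ioi (0:ℝ),
          (gammaMeasure α β (Iio (v / lam))) * (gammaMeasure α β (Ioi (v + c))) := by
  set ν := gammaMeasure α β with hν
  have hprob : IsProbabilityMeasure ν := isProbabilityMeasure_gammaMeasure hα hβ
  have mT : Measurable (fun r : ℝ => ν (Iio r)) :=
    Monotone.measurable (fun a b hab => measure_mono (Iio_subset_Iio hab))
  -- layer cake
  have hZmeas : Measurable (fun p : ℝ × ℝ => p.1 - lam * p.2 - c) :=
    (measurable_fst.sub (measurable_snd.const_mul lam)).sub measurable_const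
  have step1 : ∫⁻ p : ℝ × ℝ, ENNReal.ofReal (max (p.1 - lam * p.2 - c) 0) ∂(ν.prod ν)
      = ∫⁻ t in Ioi (0:ℝ), (ν.prod ν) {p : ℝ × ℝ | t + c + lam * p.2 < p.1} := by
    rw [lintegral_eq_lintegral_meas_lt (ν.prod ν) (f := fun p : ℝ × ℝ => max (p.1 - lam * p.2 - c) 0)
      (ae_of_all _ (fun p => le_max_right _ _)) (hZmeas.max measurable_const).aemeasurable]
    refine setLIntegral_congr_fun_ae measurableSet_Ioi (ae_of_all _ (fun t ht => ?_))
    congr 1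
    ext p
    simp only [mem_setOf_eq, lt_max_iff, mem_Ioi] at *
    constructor
    · rintro (h | h) <;> [linarith; linarith]
    · intro h; left; linarith
  have step2 : ∀ t : ℝ, (ν.prod ν) {p : ℝ × ℝ | t + c + lam * p.2 < p.1}
      = ∫⁻ x, ν (Iio ((x - t - c) / lam)) ∂ν := by
    intro t
    rw [Measure.prod_apply (measurableSet_lt ((measurable_snd.const_mul lam).const_add _) measurable_fst)]
    refine lintegral_congr (fun x => ?_)
    congr 1
    ext y
    simp only [mem_preimage, mem_setOf_eq, mem_Iio]
    rw [lt_div_iff₀ hlam]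
    constructor <;> intro h <;> linarith
  simp_rw [step1, step2]
  have hTmeas : Measurable (fun v : ℝ => ν (Iio (v / lam))) := mT.comp (measurable_id.div_const lam)
  have step3 : ∫⁻ t in Ioi (0:ℝ), ∫⁻ x, ν (Iio ((x - t - c) / lam)) ∂ν
      = ∫⁻ x, ∫⁻ t in Ioi (0:ℝ), ν (Iio ((x - t - c) / lam)) ∂volume ∂ν := by
    refine lintegral_lintegral_swap ?_
    exact (hTmeas.comp ((measurable_snd.sub measurable_fst).sub measurable_const)).aemeasurable
  rw [step3]
  have step4 : ∀ x : ℝ, ∫⁻ t in Ioi (0:ℝ), ν (Iio ((x - t - c) / lam))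
      = ∫⁻ v in Iio (x - c), ν (Iio (v / lam)) := by
    intro x
    have hemb : MeasurableEmbedding (fun t : ℝ => (x - c) - t) := by
      have : (fun t : ℝ => (x - c) - t) = (fun t => (x - c) + t) ∘ (fun t => -t) := by
        ext t; simp [sub_eq_add_neg]
      rw [this]
      exact (measurableEmbedding_addLeft _).comp measurableEmbedding_neg
    have hmp : MeasurePreserving (fun t : ℝ => (x - c) - t) volume volume :=
      Measure.measurePreserving_sub_left volume (x - c)
    have hpre : (fun t : ℝ => (x - c) - t) ⁻¹' (Iio (x - c)) = Ioi 0 := by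
      ext t; simp only [mem_preimage, mem_Iio, mem_Ioi]; constructor <;> intro h <;> linarith
    have := hmp.setLIntegral_comp_preimage_emb hemb (fun v => ν (Iio (v / lam))) (Iio (x - c))
    rw [hpre] at this
    rw [← this]
    refine setLIntegral_congr_fun_ae measurableSet_Ioi (ae_of_all _ (fun t _ => ?_))
    congr 2
    ring
  simp_rw [step4]
  have step5 : ∀ x : ℝ, ∫⁻ v in Iio (x - c), ν (Iio (v / lam))
      = ∫⁻ v, (ν (Iio (v / lam))) * (Ioi (v + c)).indicator (fun _ => 1) x := by
    intro x
    rw [← lintegral_indicator measurableSet_Iio]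
    refine lintegral_congr (fun v => ?_)
    rw [indicator, indicator]
    simp only [mem_Iio, mem_Ioi]
    by_cases h : v < x - c
    · rw [if_pos h, if_pos (by linarith), mul_one]
    · rw [if_neg h, if_neg (by intro h2; exact h (by linarith)), mul_zero]
  simp_rw [step5]
  have step6 : ∫⁻ x, (∫⁻ v, (ν (Iio (v / lam))) * (Ioi (v + c)).indicator (fun _ => 1) x) ∂ν
      = ∫⁻ v, (ν (Iio (v / lam))) * ν (Ioi (v + c)) := by
    rw [lintegral_lintegral_swap]
    · refine lintegral_congr (fun v => ?_)
      rw [lintegral_const_mul _ (measurable_const.indicator measurableSet_Ioi)]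
      congr 1
      rw [lintegral_indicator measurableSet_Ioi]
      simp
    · refine AEMeasurable.mul ?_ ?_
      · exact (hTmeas.comp measurable_snd).aemeasurable
      · have : Measurable (fun p : ℝ × ℝ => (Ioi (p.2 + c)).indicator (fun _ => (1:ℝ≥0∞)) p.1) := by
          have : (fun p : ℝ × ℝ => (Ioi (p.2 + c)).indicator (fun _ => (1:ℝ≥0∞)) p.1)
              = {q : ℝ × ℝ | q.2 + c < q.1}.indicator (fun _ => 1) := by
            ext p; rw [indicator, indicator]; simp only [mem_Ioi, mem_setOf_eq]
          rw [this]
          exact measurable_const.indicator (measurableSet_lt (measurable_snd.add_const c) measurable_fst)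
        exact this.aemeasurable
  rw [step6]
  -- restrict to Ioi 0
  rw [← lintegral_add_compl (fun v => (ν (Iio (v / lam))) * ν (Ioi (v + c))) (measurableSet_Ioi (a := (0:ℝ)))]
  have hzero : ∫⁻ v in (Ioi (0:ℝ))ᶜ, (ν (Iio (v / lam))) * ν (Ioi (v + c)) = 0 := by
    rw [setLIntegral_congr_fun_ae measurableSet_Ioi.compl (ae_of_all _ (fun v hv => ?_)), lintegral_zero]
    have hv0 : v ≤ 0 := by simpa using hv
    rw [hν, gamma_Iio_nonpos (div_nonpos_of_nonpos_of_nonneg hv0 hlam.le), zero_mul]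
  rw [hzero, add_zero]

set_option maxHeartbeats 1000000 in
/-- Proposition 2.2. If `X ~ Gamma(α, β)` (shape `α > 0`, rate `β > 0`),
`X₁, X₂` are independent copies of `X`, and `λ ∈ (0,1]`, then
`I_λ = (1-λ)^α α^{α-1} e^{-(1-λ)α} / Γ(α) + λ Γ(α,(1-λ)α)/Γ(α)
     - (1/α) ∫_{(1-λ)α}^∞ [Γ(α,t)/Γ(α)] [Γ(α,(t-(1-λ)α)/λ)/Γ(α)] dt`. -/
theorem index_gamma_closed_form
    {Ω : Type*} {mΩ : MeasurableSpace Ω} (P : Measure Ω) [IsProbabilityMeasure P]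
    (α β : ℝ) (hα : 0 < α) (hβ : 0 < β)
    (X₁ X₂ : Ω → ℝ) (hX₁m : Measurable X₁) (hX₂m : Measurable X₂)
    (hd1 : Measure.map X₁ P = gammaMeasure α β)
    (hd2 : Measure.map X₂ P = gammaMeasure α β)
    (hindep : IndepFun X₁ X₂ P)
    (μ : ℝ) (hμ : μ = α / β)
    (lam : ℝ) (hlam : lam ∈ Ioc (0 : ℝ) 1) :
    (1 / (2 * μ)) * (∫ ω, |(1 - lam) * (X₁ ω - μ) + lam * (X₁ ω - X₂ ω)| ∂P)
      = (1 - lam) ^ α * α ^ (α - 1) * Real.exp (-((1 - lam) * α)) / Real.Gamma α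
        + lam * (uGamma α ((1 - lam) * α) / Real.Gamma α)
        - (1 / α) * ∫ t in Ioi ((1 - lam) * α),
            (uGamma α t / Real.Gamma α)
              * (uGamma α ((t - (1 - lam) * α) / lam) / Real.Gamma α) := by
  obtain ⟨hlam0, hlam1⟩ := hlam
  set ν := gammaMeasure α β with hν
  have hΓ : 0 < Real.Gamma α := Real.Gamma_pos_of_pos hα
  have hμpos : 0 < μ := by rw [hμ]; positivity
  set c : ℝ := (1 - lam) * μ with hc
  have hc0 : 0 ≤ c := mul_nonneg (by linarith) hμpos.le
  set x : ℝ := (1 - lam) * α with hx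
  have hx0 : 0 ≤ x := mul_nonneg (by linarith) hα.le
  have hxc : β * c = x := by rw [hc, hμ, hx]; field_simp
  -- Step 1: reduce to product measure integral of positive part
  have hint1 : Integrable X₁ P := by
    have := (integrable_map_measure aestronglyMeasurable_id hX₁m.aemeasurable).mp
      (by rw [hd1]; exact gamma_integrable_id hα hβ)
    simpa [Function.comp] using this
  have hint2 : Integrable X₂ P := by
    have := (integrable_map_measure aestronglyMeasurable_id hX₂m.aemeasurable).mp
      (by rw [hd2]; exact gamma_integrable_id hα hβ)
    simpa [Function.comp] using this
  have hE1 : ∫ ω, X₁ ω ∂P = μ := by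
    have := integral_map hX₁m.aemeasurable (aestronglyMeasurable_id (μ := Measure.map X₁ P)
      (α := ℝ))
    rw [hd1] at this
    simp only [id_eq] at this
    rw [hμ, ← gamma_mean hα hβ, ← hν]
    exact this.symm
  have hE2 : ∫ ω, X₂ ω ∂P = μ := by
    have := integral_map hX₂m.aemeasurable (aestronglyMeasurable_id (μ := Measure.map X₂ P)
      (α := ℝ))
    rw [hd2] at this
    simp only [id_eq] at this
    rw [hμ, ← gamma_mean hα hβ, ← hν]
    exact this.symm
  have hZint : Integrable (fun ω => X₁ ω - lam * X₂ ω - c) P :=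
    (hint1.sub (hint2.const_mul lam)).sub (integrable_const c)
  have habs : ∀ ω, |(1 - lam) * (X₁ ω - μ) + lam * (X₁ ω - X₂ ω)|
      = 2 * max (X₁ ω - lam * X₂ ω - c) 0 - (X₁ ω - lam * X₂ ω - c) := by
    intro ω
    have h1 : (1 - lam) * (X₁ ω - μ) + lam * (X₁ ω - X₂ ω) = X₁ ω - lam * X₂ ω - c := by
      rw [hc]; ring
    rw [h1]
    rcases le_or_gt (X₁ ω - lam * X₂ ω - c) 0 with h | h
    · rw [abs_of_nonpos h, max_eq_right h]; ring
    · rw [abs_of_pos h, max_eq_left h.le]; ring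
  have hsplit : ∫ ω, |(1 - lam) * (X₁ ω - μ) + lam * (X₁ ω - X₂ ω)| ∂P
      = 2 * ∫ ω, max (X₁ ω - lam * X₂ ω - c) 0 ∂P := by
    simp_rw [habs]
    rw [integral_sub (hZint.pos_part.const_mul 2) hZint, integral_const_mul]
    have : ∫ ω, (X₁ ω - lam * X₂ ω - c) ∂P = 0 := by
      have hA : Integrable (fun ω => X₁ ω - lam * X₂ ω) P := hint1.sub (hint2.const_mul lam)
      have h4 := integral_sub hA (integrable_const (μ := P) c)
      have h5 := integral_sub hint1 (hint2.const_mul lam)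
      rw [h4, h5, integral_const_mul, hE1, hE2, integral_const]
      simp [hc]
      ring
    rw [this, sub_zero]
  -- move to product measure
  have hmap : Measure.map (fun ω => (X₁ ω, X₂ ω)) P = ν.prod ν := by
    exact ((indepFun_iff_map_prod_eq_prod_map_map hX₁m.aemeasurable hX₂m.aemeasurable).mp
      hindep).trans (by rw [hd1, hd2])
  have hprob : IsProbabilityMeasure ν := isProbabilityMeasure_gammaMeasure hα hβ
  have hWm : Measurable (fun p : ℝ × ℝ => max (p.1 - lam * p.2 - c) 0) :=
    ((measurable_fst.sub (measurable_snd.const_mul lam)).sub measurable_const).max measurable_const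
  have hmax : ∫ ω, max (X₁ ω - lam * X₂ ω - c) 0 ∂P
      = ∫ p : ℝ × ℝ, max (p.1 - lam * p.2 - c) 0 ∂(ν.prod ν) := by
    rw [← hmap, integral_map (hX₁m.prodMk hX₂m).aemeasurable hWm.aestronglyMeasurable]
  -- lintegral evaluation
  have hlay : ∫ p : ℝ × ℝ, max (p.1 - lam * p.2 - c) 0 ∂(ν.prod ν)
      = (∫⁻ v in Ioi (0:ℝ), (ν (Iio (v / lam))) * (ν (Ioi (v + c)))).toReal := by
    rw [integral_eq_lintegral_of_nonneg_ae (f := fun p : ℝ × ℝ => max (p.1 - lam * p.2 - c) 0) (ae_of_all _ (fun p => le_max_right _ _))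
      hWm.aestronglyMeasurable, key_lintegral hα hβ c lam hc0 hlam0]
  -- convert lintegral to real integral
  set W : ℝ → ℝ := fun v => (1 - uGamma α (β * (v / lam)) / Real.Gamma α)
      * (uGamma α (β * (v + c)) / Real.Gamma α) with hW
  have hWnn : ∀ v : ℝ, 0 < v → 0 ≤ W v := by
    intro v hv
    have h1 : 0 ≤ β * (v / lam) := by positivity
    have h2 : 0 ≤ β * (v + c) := by positivity
    refine mul_nonneg ?_ (div_nonneg (uGamma_nonneg h2) hΓ.le)
    have := uGamma_le hα h1
    rw [sub_nonneg, div_le_one hΓ]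
    exact this
  have R1 : ∫⁻ v in Ioi (0:ℝ), (ν (Iio (v / lam))) * (ν (Ioi (v + c)))
      = ∫⁻ v in Ioi (0:ℝ), ENNReal.ofReal (W v) := by
    refine setLIntegral_congr_fun_ae measurableSet_Ioi (ae_of_all _ (fun v hv => ?_))
    have hv : (0:ℝ) < v := hv
    have h1 : (0:ℝ) ≤ v / lam := by positivity
    have h2 : (0:ℝ) ≤ v + c := by linarith
    rw [hν] at *
    rw [gamma_Iio hα hβ h1, gamma_Ioi hα hβ h2, hW]
    rw [← ENNReal.ofReal_mul]
    have h3 : 0 ≤ β * (v / lam) := by positivity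
    rw [sub_nonneg, div_le_one hΓ]
    exact uGamma_le hα h3
  have hsm1 : AEStronglyMeasurable W (volume.restrict (Ioi (0:ℝ))) := by
    have hcont : Continuous (fun v : ℝ => (1 - KG α (β * (v / lam)) / Real.Gamma α)
        * (KG α (β * (v + c)) / Real.Gamma α)) := by
      refine Continuous.mul ?_ ?_
      · exact continuous_const.sub (((KG_cont hα).comp
          (continuous_const.mul (continuous_id.div_const lam))).div_const _)
      · exact (((KG_cont hα).comp
          (continuous_const.mul (continuous_id.add continuous_const))).div_const _)
    refine hcont.aestronglyMeasurable.restrict.congr ?_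
    filter_upwards [ae_restrict_mem measurableSet_Ioi] with v hv
    have hv : (0:ℝ) < v := hv
    simp only [hW]
    rw [uGamma_eq_KG hα (by positivity), uGamma_eq_KG hα (by positivity : (0:ℝ) ≤ β * (v + c))]
  have R2 : (∫⁻ v in Ioi (0:ℝ), ENNReal.ofReal (W v)).toReal = ∫ v in Ioi (0:ℝ), W v := by
    rw [integral_eq_lintegral_of_nonneg_ae ?_ hsm1]
    filter_upwards [ae_restrict_mem measurableSet_Ioi] with v hv
    exact hWnn v hv
  -- substitution t = β v + x
  set W2 : ℝ → ℝ := fun t => (1 - uGamma α ((t - x) / lam) / Real.Gamma α)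
      * (uGamma α t / Real.Gamma α) with hW2
  have R3 : ∫ v in Ioi (0:ℝ), W v = β⁻¹ * ∫ t in Ioi x, W2 t := by
    have e1 : ∀ v : ℝ, W v = (fun u => W2 (u + x)) (β * v) := by
      intro v
      rw [hW, hW2]
      simp only [add_sub_cancel_right]
      rw [mul_div_assoc β v lam, ← hxc]
      ring_nf
    have e2 : ∫ v in Ioi (0:ℝ), W v = ∫ v in Ioi (0:ℝ), (fun u => W2 (u + x)) (β * v) := by
      exact setIntegral_congr_fun measurableSet_Ioi (fun v _ => e1 v)
    rw [e2, integral_comp_mul_left_Ioi (fun u => W2 (u + x)) 0 hβ, mul_zero, smul_eq_mul]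
    congr 1
    -- shift
    have hemb : MeasurableEmbedding (fun u : ℝ => u + x) := measurableEmbedding_addRight x
    have hmp : MeasurePreserving (fun u : ℝ => u + x) volume volume :=
      measurePreserving_add_right volume x
    have hpre : (fun u : ℝ => u + x) ⁻¹' (Ioi x) = Ioi 0 := by
      ext u; simp only [mem_preimage, mem_Ioi]; constructor <;> intro h <;> linarith
    have := hmp.setIntegral_preimage_emb hemb W2 (Ioi x)
    rw [hpre] at this
    exact this
  -- split the integral
  have hB : IntegrableOn (fun t => uGamma α t / Real.Gamma α) (Ioi x) :=
    (integrableOn_uGamma hα hx0).div_const _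
  have hsm4 : AEStronglyMeasurable (fun t => uGamma α ((t - x) / lam)) (volume.restrict (Ioi x)) := by
    have hcont : Continuous (fun t : ℝ => KG α ((t - x) / lam)) :=
      (KG_cont hα).comp ((continuous_id.sub continuous_const).div_const lam)
    refine hcont.aestronglyMeasurable.restrict.congr ?_
    filter_upwards [ae_restrict_mem measurableSet_Ioi] with t ht
    have ht : x < t := ht
    exact (uGamma_eq_KG hα (div_nonneg (by linarith) hlam0.le)).symm
  have hBA : IntegrableOn (fun t => (uGamma α t / Real.Gamma α)
      * (uGamma α ((t - x) / lam) / Real.Gamma α)) (Ioi x) := by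
    have hsm3 : AEStronglyMeasurable (fun t => uGamma α t / Real.Gamma α)
        (volume.restrict (Ioi x)) := by
      simp only [div_eq_mul_inv]
      exact (uGamma_aesm hα hx0).mul aestronglyMeasurable_const
    have hsm4' : AEStronglyMeasurable (fun t => uGamma α ((t - x) / lam) / Real.Gamma α)
        (volume.restrict (Ioi x)) := by
      simp only [div_eq_mul_inv]
      exact hsm4.mul aestronglyMeasurable_const
    refine Integrable.mono hB (hsm3.mul hsm4') ?_
    filter_upwards [ae_restrict_mem measurableSet_Ioi] with t ht
    have ht : x < t := ht
    have h0 : (0:ℝ) ≤ (t - x) / lam := div_nonneg (by linarith) hlam0.le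
    have h5 : 0 ≤ uGamma α ((t - x) / lam) / Real.Gamma α :=
      div_nonneg (uGamma_nonneg h0) hΓ.le
    have h6 : uGamma α ((t - x) / lam) / Real.Gamma α ≤ 1 := by
      rw [div_le_one hΓ]; exact uGamma_le hα h0
    rw [Real.norm_eq_abs, Real.norm_eq_abs, abs_mul]
    calc |uGamma α t / Real.Gamma α| * |uGamma α ((t - x) / lam) / Real.Gamma α|
        ≤ |uGamma α t / Real.Gamma α| * 1 := by
          refine mul_le_mul_of_nonneg_left ?_ (abs_nonneg _)
          rw [abs_of_nonneg h5]; exact h6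
      _ = |uGamma α t / Real.Gamma α| := mul_one _
  have R4 : ∫ t in Ioi x, W2 t = (∫ t in Ioi x, uGamma α t / Real.Gamma α)
      - ∫ t in Ioi x, (uGamma α t / Real.Gamma α) * (uGamma α ((t - x) / lam) / Real.Gamma α) := by
    rw [← integral_sub hB hBA]
    refine setIntegral_congr_fun measurableSet_Ioi (fun t _ => ?_)
    rw [hW2]; ring
  have R5 : ∫ t in Ioi x, uGamma α t / Real.Gamma α
      = (α * uGamma α x + x ^ α * Real.exp (-x) - x * uGamma α x) / Real.Gamma α := by
    rw [integral_div, integral_uGamma_Ioi hα hx0, uGamma_succ hα hx0]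
  -- assemble
  rw [hsplit, hmax, hlay, R1, R2, R3, R4, R5]
  set B0 : ℝ := ∫ t in Ioi x, (uGamma α t / Real.Gamma α) * (uGamma α ((t - x) / lam) / Real.Gamma α)
  have hxα : x ^ α = (1 - lam) ^ α * α ^ α := by
    rw [hx, Real.mul_rpow (by linarith) hα.le]
  have hααα : α ^ α = α ^ (α - 1) * α := by
    rw [Real.rpow_sub_one hα.ne', div_mul_cancel₀ _ hα.ne']
  have hexp : Real.exp (-((1 - lam) * α)) = Real.exp (-x) := by rw [hx]
  rw [hμ, hxα, hααα, hexp, hx]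
  field_simp
  ring
end

section
/- Let X ~ Gamma(α, β) with shape α > 0 and rate β > 0. Then the Hoover index of X equals H = (1/(2μ)) E|X − μ| = α^{α−1} exp{−α} / Γ(α), where μ = α/β = E[X]. -/
open MeasureTheory ProbabilityTheory Set
open scoped NNReal ENNReal

/-- Remark 2.1 / Hoover index of a gamma distribution. If `X ~ Gamma(α, β)`
(shape `α > 0`, rate `β > 0`) and `μ = α/β = E[X]`, then the Hoover index satisfies
`H = (1/(2μ)) E|X - μ| = α^{α-1} e^{-α} / Γ(α)`. -/
theorem hoover_gamma_closed_form
    {Ω : Type*} {mΩ : MeasurableSpace Ω} (P : Measure Ω) [IsProbabilityMeasure P]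
    (α β : ℝ) (hα : 0 < α) (hβ : 0 < β)
    (X : Ω → ℝ) (hXm : Measurable X)
    (hd : Measure.map X P = gammaMeasure α β)
    (μ : ℝ) (hμ : μ = α / β) :
    (1 / (2 * μ)) * (∫ ω, |X ω - μ| ∂P)
      = α ^ (α - 1) * Real.exp (-α) / Real.Gamma α := by
  have hΓ : 0 < Real.Gamma α := Real.Gamma_pos_of_pos hα
  have hμ0 : 0 < μ := hμ ▸ div_pos hα hβ
  have hβμ : β * μ = α := by rw [hμ]; field_simp
  set f : ℝ → ℝ := gammaPDFReal α β with hf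
  set C : ℝ := β ^ (α - 1) / Real.Gamma α with hC
  set G : ℝ → ℝ := fun x => C * (x ^ α * Real.exp (-(β * x))) with hG
  -- Step 1: pushforward
  have h1 : ∫ ω, |X ω - μ| ∂P = ∫ x, |x - μ| ∂(gammaMeasure α β) := by
    rw [← hd, integral_map hXm.aemeasurable]
    exact (continuous_abs.comp (continuous_id.sub continuous_const)).aestronglyMeasurable
  -- Step 2: withDensity
  have h2 : ∫ x, |x - μ| ∂(gammaMeasure α β) = ∫ x, f x * |x - μ| := by
    rw [gammaMeasure]
    have he : gammaPDF α β = fun x => ((Real.toNNReal (f x) : ℝ≥0) : ℝ≥0∞) := rfl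
    rw [he, integral_withDensity_eq_integral_smul
      ((measurable_gammaPDFReal α β).real_toNNReal) _]
    congr 1; ext x
    rw [NNReal.smul_def, smul_eq_mul, Real.coe_toNNReal _ (gammaPDFReal_nonneg hα hβ x)]
  -- Step 3: reduce to `Ioi 0`
  have hmeas : Measurable fun x : ℝ => f x * |x - μ| :=
    (measurable_gammaPDFReal α β).mul ((measurable_id.sub_const μ).abs)
  have h3 : (∫ x, f x * |x - μ|) = ∫ x in Ioi (0:ℝ), f x * |x - μ| := by
    rw [← integral_indicator measurableSet_Ioi]
    apply integral_congr_ae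
    filter_upwards [measure_eq_zero_iff_ae_notMem.mp (measure_singleton (0:ℝ))] with x hx
    by_cases hx' : x ∈ Ioi (0:ℝ)
    · rw [indicator_of_mem hx']
    · rw [indicator_of_notMem hx']
      have hxneg : x < 0 :=
        lt_of_le_of_ne (not_lt.mp hx') (fun h => hx (by simp [h]))
      have : f x = 0 := by
        simp only [hf, gammaPDFReal, if_neg (not_le.mpr hxneg)]
      rw [this, zero_mul]
  -- derivative of G
  have hderiv : ∀ x ∈ Ioi (0:ℝ), HasDerivAt G ((μ - x) * f x) x := by
    intro x hx
    have hx0 : (0:ℝ) < x := hx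
    have hd1 : HasDerivAt (fun y : ℝ => y ^ α) (α * x ^ (α - 1)) x :=
      Real.hasDerivAt_rpow_const (Or.inl hx0.ne')
    have hd2 : HasDerivAt (fun y : ℝ => Real.exp (-(β * y))) (-β * Real.exp (-(β * x))) x := by
      have h0 : HasDerivAt (fun y : ℝ => -(β * y)) (-β) x := by
        simpa using ((hasDerivAt_id x).const_mul β).fun_neg
      simpa [mul_comm] using h0.exp
    have hd3 := HasDerivAt.const_mul C (hd1.mul hd2)
    refine hd3.congr_deriv (Eq.symm ?_)
    have hfx : f x = β ^ α / Real.Gamma α * x ^ (α - 1) * Real.exp (-(β * x)) := by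
      simp only [hf, gammaPDFReal, if_pos hx0.le]
    have hxα : x ^ α = x ^ (α - 1) * x := by
      rw [← Real.rpow_add_one hx0.ne' (α - 1), sub_add_cancel]
    have hβα : β ^ α = β ^ (α - 1) * β := by
      rw [← Real.rpow_add_one hβ.ne' (α - 1), sub_add_cancel]
    rw [hfx, hC, hxα, hβα]
    linear_combination (x ^ (α - 1) * Real.exp (-(β * x)) * β ^ (α - 1) / Real.Gamma α) * hβμ
  have hGcont : Continuous G := by
    exact continuous_const.mul ((Real.continuous_rpow_const hα.le).mul
      ((continuous_const.mul continuous_id).neg.rexp))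
  have hGtend : Filter.Tendsto G Filter.atTop (nhds 0) := by
    have := (tendsto_rpow_mul_exp_neg_mul_atTop_nhds_zero α β hβ).const_mul C
    simpa [hG, neg_mul] using this
  have hG0 : G 0 = 0 := by
    simp [hG, Real.zero_rpow hα.ne']
  -- Ioi μ part
  have hderivN : ∀ x ∈ Ioi μ, HasDerivAt (fun y => -G y) ((x - μ) * f x) x := by
    intro x hx
    have := (hderiv x (lt_trans hμ0 hx)).neg
    refine this.congr_deriv (Eq.symm ?_); ring
  have hfnonneg : ∀ x, 0 ≤ f x := gammaPDFReal_nonneg hα hβ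
  have hnonnegN : ∀ x ∈ Ioi μ, 0 ≤ (x - μ) * f x := fun x hx =>
    mul_nonneg (by linarith [mem_Ioi.mp hx]) (hfnonneg x)
  have htendN : Filter.Tendsto (fun y => -G y) Filter.atTop (nhds 0) := by
    simpa using hGtend.neg
  have hIoi : ∫ x in Ioi μ, (x - μ) * f x = G μ := by
    have := integral_Ioi_of_hasDerivAt_of_nonneg
      (hGcont.neg.continuousWithinAt) hderivN hnonnegN htendN
    simpa using this
  have hintIoi : IntegrableOn (fun x => (x - μ) * f x) (Ioi μ) :=
    integrableOn_Ioi_deriv_of_nonneg (hGcont.neg.continuousWithinAt) hderivN hnonnegN htendN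
  -- Ioc 0 μ part : integrability
  have hintIoc : IntegrableOn (fun x => (μ - x) * f x) (Ioc 0 μ) := by
    set K : ℝ := μ * (β ^ α / Real.Gamma α) with hK
    have hK0 : 0 ≤ K := by positivity
    have hbound : IntegrableOn (fun x : ℝ => K * x ^ (α - 1)) (Ioc 0 μ) := by
      have h := intervalIntegral.intervalIntegrable_rpow' (a := 0) (b := μ)
        (by linarith : (-1:ℝ) < α - 1)
      rw [intervalIntegrable_iff_integrableOn_Ioc_of_le hμ0.le] at h
      exact h.const_mul K
    refine Integrable.mono hbound ?_ ?_
    · exact (((measurable_const.sub measurable_id).mul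
        (measurable_gammaPDFReal α β)).aestronglyMeasurable).restrict
    · rw [ae_restrict_iff' measurableSet_Ioc]
      refine Filter.Eventually.of_forall fun x hx => ?_
      have hx1 : 0 < x := hx.1
      have hx2 : x ≤ μ := hx.2
      have hrp : (0:ℝ) ≤ x ^ (α - 1) := Real.rpow_nonneg hx1.le _
      have hfx : f x = β ^ α / Real.Gamma α * x ^ (α - 1) * Real.exp (-(β * x)) := by
        simp only [hf, gammaPDFReal, if_pos hx1.le]
      have hfle : f x ≤ β ^ α / Real.Gamma α * x ^ (α - 1) := by
        rw [hfx]
        refine mul_le_of_le_one_right (by positivity) ?_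
        rw [Real.exp_le_one_iff]
        nlinarith
      rw [Real.norm_eq_abs, Real.norm_eq_abs, abs_mul,
        abs_of_nonneg (by linarith : (0:ℝ) ≤ μ - x), abs_of_nonneg (hfnonneg x),
        abs_of_nonneg (by positivity : (0:ℝ) ≤ K * x ^ (α - 1)), hK]
      calc (μ - x) * f x ≤ μ * (β ^ α / Real.Gamma α * x ^ (α - 1)) :=
            mul_le_mul (by linarith) hfle (hfnonneg x) hμ0.le
        _ = μ * (β ^ α / Real.Gamma α) * x ^ (α - 1) := by ring
  have hIoc : ∫ x in Ioc 0 μ, (μ - x) * f x = G μ := by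
    have h := intervalIntegral.integral_eq_sub_of_hasDeriv_right_of_le hμ0.le
      hGcont.continuousOn (fun x hx => ((hderiv x hx.1).hasDerivWithinAt))
      (by rw [intervalIntegrable_iff_integrableOn_Ioc_of_le hμ0.le]; exact hintIoc)
    rw [intervalIntegral.integral_of_le hμ0.le] at h
    rw [h, hG0, sub_zero]
  -- congruences to the absolute-value integrand
  have hint1 : IntegrableOn (fun x => f x * |x - μ|) (Ioc 0 μ) := by
    refine hintIoc.congr_fun (fun x hx => ?_) measurableSet_Ioc
    rw [abs_of_nonpos (by linarith [hx.2] : x - μ ≤ 0)]; ring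
  have hint2 : IntegrableOn (fun x => f x * |x - μ|) (Ioi μ) := by
    refine hintIoi.congr_fun (fun x hx => ?_) measurableSet_Ioi
    rw [abs_of_nonneg (by linarith [mem_Ioi.mp hx] : (0:ℝ) ≤ x - μ)]; ring
  have hsplit : (∫ x in Ioi (0:ℝ), f x * |x - μ|) = G μ + G μ := by
    rw [← Ioc_union_Ioi_eq_Ioi hμ0.le,
      setIntegral_union Ioc_disjoint_Ioi_same measurableSet_Ioi hint1 hint2]
    congr 1
    · rw [← hIoc]
      refine setIntegral_congr_fun measurableSet_Ioc fun x hx => ?_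
      rw [abs_of_nonpos (by linarith [hx.2] : x - μ ≤ 0)]; ring
    · rw [← hIoi]
      refine setIntegral_congr_fun measurableSet_Ioi fun x hx => ?_
      rw [abs_of_nonneg (by linarith [mem_Ioi.mp hx] : (0:ℝ) ≤ x - μ)]; ring
  rw [h1, h2, h3, hsplit]
  -- final arithmetic
  have hGμ : G μ = C * (α ^ α / β ^ α * Real.exp (-α)) := by
    show C * (μ ^ α * Real.exp (-(β * μ))) = _
    rw [hβμ, hμ, Real.div_rpow hα.le hβ.le]
  rw [hGμ]
  have hαα : α ^ α = α ^ (α - 1) * α := by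
    rw [← Real.rpow_add_one hα.ne' (α - 1), sub_add_cancel]
  have hββ : β ^ α = β ^ (α - 1) * β := by
    rw [← Real.rpow_add_one hβ.ne' (α - 1), sub_add_cancel]
  have hβα1 : (0:ℝ) < β ^ (α - 1) := Real.rpow_pos_of_pos hβ _
  rw [hC, hαα, hββ, hμ]
  field_simp
  ring
end

section
/- Let X be a non-negative random variable with finite mean μ = E[X] > 0 and let λ ∈ [0,1]. Then 0 ≤ I_λ ≤ G ≤ 1, where G is the Gini coefficient of X. Moreover, if X = c almost surely for some constant c > 0, then I_λ = 0. -/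
open MeasureTheory ProbabilityTheory Set

/-- boundedness. For a non-negative random variable `X` with finite mean
`μ = E[X] > 0`, independent copies `X₁, X₂` of `X`, and `λ ∈ [0,1]`, one has
`0 ≤ I_λ ≤ G ≤ 1`, where `G = (1/(2μ)) E|X₁-X₂|` is the Gini coefficient. Moreover, if
`X = c` almost surely for some constant `c > 0`, then `I_λ = 0`. -/
theorem index_bounds_and_degenerate
    {Ω : Type*} {mΩ : MeasurableSpace Ω} (P : Measure Ω) [IsProbabilityMeasure P]
    (X X₁ X₂ : Ω → ℝ)
    (hXm : Measurable X) (hX₁m : Measurable X₁) (hX₂m : Measurable X₂)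
    (hXnn : ∀ ω, 0 ≤ X ω)
    (hint : Integrable X P)
    (hid1 : IdentDistrib X₁ X P P) (hid2 : IdentDistrib X₂ X P P)
    (hindep : IndepFun X₁ X₂ P)
    (μ : ℝ) (hμ : μ = ∫ ω, X ω ∂P) (hμpos : 0 < μ)
    (lam : ℝ) (hlam : lam ∈ Icc (0 : ℝ) 1) :
    0 ≤ (1 / (2 * μ)) * (∫ ω, |(1 - lam) * (X₁ ω - μ) + lam * (X₁ ω - X₂ ω)| ∂P)
    ∧ (1 / (2 * μ)) * (∫ ω, |(1 - lam) * (X₁ ω - μ) + lam * (X₁ ω - X₂ ω)| ∂P)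
        ≤ (1 / (2 * μ)) * (∫ ω, |X₁ ω - X₂ ω| ∂P)
    ∧ (1 / (2 * μ)) * (∫ ω, |X₁ ω - X₂ ω| ∂P) ≤ 1
    ∧ ∀ c : ℝ, 0 < c → (∀ᵐ ω ∂P, X ω = c) →
        (1 / (2 * μ)) * (∫ ω, |(1 - lam) * (X₁ ω - μ) + lam * (X₁ ω - X₂ ω)| ∂P) = 0 := by
  obtain ⟨hlam0, hlam1⟩ := hlam
  have hcnn : (0:ℝ) ≤ 1 / (2 * μ) := by positivity
  have hint1 : Integrable X₁ P := hid1.integrable_iff.mpr hint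
  have hint2 : Integrable X₂ P := hid2.integrable_iff.mpr hint
  have h1nn : ∀ᵐ ω ∂P, 0 ≤ X₁ ω := by
    have h0 : P (X₁ ⁻¹' Iio 0) = P (X ⁻¹' Iio 0) := hid1.measure_mem_eq measurableSet_Iio
    have hX0 : X ⁻¹' Iio 0 = ∅ := by
      ext ω; simp [not_lt.mpr (hXnn ω)]
    rw [ae_iff]
    have : {ω | ¬ 0 ≤ X₁ ω} = X₁ ⁻¹' Iio 0 := by ext ω; simp
    rw [this, h0, hX0]; simp
  have h2nn : ∀ᵐ ω ∂P, 0 ≤ X₂ ω := by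
    have h0 : P (X₂ ⁻¹' Iio 0) = P (X ⁻¹' Iio 0) := hid2.measure_mem_eq measurableSet_Iio
    have hX0 : X ⁻¹' Iio 0 = ∅ := by
      ext ω; simp [not_lt.mpr (hXnn ω)]
    rw [ae_iff]
    have : {ω | ¬ 0 ≤ X₂ ω} = X₂ ⁻¹' Iio 0 := by ext ω; simp
    rw [this, h0, hX0]; simp
  -- distributions
  set ν : Measure ℝ := P.map X with hνdef
  have hνprob : IsProbabilityMeasure ν := Measure.isProbabilityMeasure_map hXm.aemeasurable
  have hνint : Integrable (fun x : ℝ => x) ν :=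
    (integrable_map_measure aestronglyMeasurable_id hXm.aemeasurable).mpr hint
  have hmean : ∫ x, x ∂ν = μ := by
    rw [hμ, hνdef]
    exact integral_map hXm.aemeasurable aestronglyMeasurable_id
  have hmap : P.map (fun ω => (X₁ ω, X₂ ω)) = ν.prod ν := by
    rw [(indepFun_iff_map_prod_eq_prod_map_map hX₁m.aemeasurable hX₂m.aemeasurable).mp hindep,
      hid1.map_eq, hid2.map_eq]
  have hfst : Integrable (fun p : ℝ × ℝ => p.1) (ν.prod ν) := by
    rw [← hmap]
    exact (integrable_map_measure measurable_fst.aestronglyMeasurable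
      (hX₁m.prodMk hX₂m).aemeasurable).mpr hint1
  have hsnd : Integrable (fun p : ℝ × ℝ => p.2) (ν.prod ν) := by
    rw [← hmap]
    exact (integrable_map_measure measurable_snd.aestronglyMeasurable
      (hX₁m.prodMk hX₂m).aemeasurable).mpr hint2
  have hFint : Integrable (fun p : ℝ × ℝ => |p.1 - p.2|) (ν.prod ν) := (hfst.sub hsnd).abs
  have hG : ∫ ω, |X₁ ω - X₂ ω| ∂P = ∫ p : ℝ × ℝ, |p.1 - p.2| ∂(ν.prod ν) := by
    rw [← hmap, integral_map (f := fun p : ℝ × ℝ => |p.1 - p.2|) (hX₁m.prodMk hX₂m).aemeasurable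
      (measurable_fst.sub measurable_snd).abs.aestronglyMeasurable]
  -- key inequality : E|X₁ - μ| ≤ E|X₁ - X₂|
  have hkey : ∫ ω, |X₁ ω - μ| ∂P ≤ ∫ ω, |X₁ ω - X₂ ω| ∂P := by
    have hL : ∫ ω, |X₁ ω - μ| ∂P = ∫ x, |x - μ| ∂ν := by
      rw [hνdef, ← hid1.map_eq]
      exact (integral_map hX₁m.aemeasurable
        (measurable_id.sub measurable_const).abs.aestronglyMeasurable).symm
    rw [hL, hG]
    have step : ∀ x : ℝ, |x - μ| ≤ ∫ y, |x - y| ∂ν := by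
      intro x
      have hx : x - μ = ∫ y, (x - y) ∂ν := by
        rw [integral_sub (integrable_const x) hνint, integral_const, hmean]
        simp
      rw [hx]
      simpa [Real.norm_eq_abs] using norm_integral_le_integral_norm (fun y => x - y) (μ := ν)
    calc ∫ x, |x - μ| ∂ν ≤ ∫ x, ∫ y, |x - y| ∂ν ∂ν := by
          refine integral_mono ((hνint.sub (integrable_const μ)).abs) ?_ step
          exact hFint.integral_prod_left
      _ = ∫ p : ℝ × ℝ, |p.1 - p.2| ∂(ν.prod ν) :=
          integral_integral (f := fun x y => |x - y|) hFint
  -- integrabilities in Ω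
  have hA : Integrable (fun ω => |X₁ ω - μ|) P := (hint1.sub (integrable_const μ)).abs
  have hB : Integrable (fun ω => |X₁ ω - X₂ ω|) P := (hint1.sub hint2).abs
  have hLint : Integrable (fun ω => |(1 - lam) * (X₁ ω - μ) + lam * (X₁ ω - X₂ ω)|) P :=
    (((hint1.sub (integrable_const μ)).const_mul (1 - lam)).add
      ((hint1.sub hint2).const_mul lam)).abs
  -- second inequality
  have hIle : ∫ ω, |(1 - lam) * (X₁ ω - μ) + lam * (X₁ ω - X₂ ω)| ∂P
      ≤ ∫ ω, |X₁ ω - X₂ ω| ∂P := by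
    have hpt : ∀ ω, |(1 - lam) * (X₁ ω - μ) + lam * (X₁ ω - X₂ ω)|
        ≤ (1 - lam) * |X₁ ω - μ| + lam * |X₁ ω - X₂ ω| := by
      intro ω
      calc |(1 - lam) * (X₁ ω - μ) + lam * (X₁ ω - X₂ ω)|
          ≤ |(1 - lam) * (X₁ ω - μ)| + |lam * (X₁ ω - X₂ ω)| := abs_add_le _ _
        _ = (1 - lam) * |X₁ ω - μ| + lam * |X₁ ω - X₂ ω| := by
            rw [abs_mul, abs_mul, abs_of_nonneg (by linarith : (0:ℝ) ≤ 1 - lam),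
              abs_of_nonneg hlam0]
    calc ∫ ω, |(1 - lam) * (X₁ ω - μ) + lam * (X₁ ω - X₂ ω)| ∂P
        ≤ ∫ ω, ((1 - lam) * |X₁ ω - μ| + lam * |X₁ ω - X₂ ω|) ∂P :=
          integral_mono hLint ((hA.const_mul _).add (hB.const_mul _)) hpt
      _ = (1 - lam) * ∫ ω, |X₁ ω - μ| ∂P + lam * ∫ ω, |X₁ ω - X₂ ω| ∂P := by
          rw [integral_add (hA.const_mul _) (hB.const_mul _), integral_const_mul,
            integral_const_mul]
      _ ≤ (1 - lam) * ∫ ω, |X₁ ω - X₂ ω| ∂P + lam * ∫ ω, |X₁ ω - X₂ ω| ∂P :=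
          add_le_add (mul_le_mul_of_nonneg_left hkey (by linarith)) le_rfl
      _ = ∫ ω, |X₁ ω - X₂ ω| ∂P := by ring
  -- third inequality
  have hGle : (1 / (2 * μ)) * (∫ ω, |X₁ ω - X₂ ω| ∂P) ≤ 1 := by
    have hsum : ∫ ω, |X₁ ω - X₂ ω| ∂P ≤ 2 * μ := by
      have h1 : ∫ ω, |X₁ ω - X₂ ω| ∂P ≤ ∫ ω, (X₁ ω + X₂ ω) ∂P := by
        refine integral_mono_ae hB (hint1.add hint2) ?_
        filter_upwards [h1nn, h2nn] with ω h1 h2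
        exact abs_sub_le_iff.mpr ⟨by linarith, by linarith⟩
      have h2 : ∫ ω, (X₁ ω + X₂ ω) ∂P = 2 * μ := by
        rw [integral_add hint1 hint2, hid1.integral_eq, hid2.integral_eq, ← hμ]; ring
      linarith
    calc (1 / (2 * μ)) * (∫ ω, |X₁ ω - X₂ ω| ∂P) ≤ (1 / (2 * μ)) * (2 * μ) :=
          mul_le_mul_of_nonneg_left hsum hcnn
      _ = 1 := by field_simp
  refine ⟨mul_nonneg hcnn (integral_nonneg fun ω => abs_nonneg _),
    mul_le_mul_of_nonneg_left hIle hcnn, hGle, ?_⟩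
  -- degenerate case
  intro c hc hXc
  have hμc : μ = c := by
    rw [hμ, integral_congr_ae (g := fun _ => c) hXc]
    simp
  have h1c : ∀ᵐ ω ∂P, X₁ ω = c := by
    have h0 : P (X₁ ⁻¹' {c}ᶜ) = P (X ⁻¹' {c}ᶜ) :=
      hid1.measure_mem_eq (measurableSet_singleton c).compl
    have hX0 : P (X ⁻¹' {c}ᶜ) = 0 := by
      have h := ae_iff.mp hXc
      have hset : X ⁻¹' ({c}ᶜ : Set ℝ) = {ω | ¬ X ω = c} := by ext ω; simp
      rw [hset]; exact h
    rw [ae_iff]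
    have : {ω | ¬ X₁ ω = c} = X₁ ⁻¹' {c}ᶜ := by ext ω; simp
    rw [this, h0, hX0]
  have h2c : ∀ᵐ ω ∂P, X₂ ω = c := by
    have h0 : P (X₂ ⁻¹' {c}ᶜ) = P (X ⁻¹' {c}ᶜ) :=
      hid2.measure_mem_eq (measurableSet_singleton c).compl
    have hX0 : P (X ⁻¹' {c}ᶜ) = 0 := by
      have h := ae_iff.mp hXc
      have hset : X ⁻¹' ({c}ᶜ : Set ℝ) = {ω | ¬ X ω = c} := by ext ω; simp
      rw [hset]; exact h
    rw [ae_iff]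
    have : {ω | ¬ X₂ ω = c} = X₂ ⁻¹' {c}ᶜ := by ext ω; simp
    rw [this, h0, hX0]
  have hzero : ∀ᵐ ω ∂P, |(1 - lam) * (X₁ ω - μ) + lam * (X₁ ω - X₂ ω)| = (0:ℝ) := by
    filter_upwards [h1c, h2c] with ω h1 h2
    rw [h1, h2, hμc]
    simp
  rw [integral_congr_ae hzero, integral_zero, mul_zero]
end

section
/- Let W, Y, Z be independent, non-degenerate, non-negative random variables, let a, b, c ≥ 0 and z > 0, and assume all Laplace transforms and expectations involved exist and are finite. Then E[|aW + bY − cZ| exp{−z(W+Y+Z)}] = L_W(z) L_Y(z) L_Z(z) · {a E[W_z] + b E[Y_z] + c E[Z_z]} · G(aW_z + bY_z, cZ_z), where W_z, Y_z, Z_z are independent random variables distributed as the exponential tiltings of W, Y, Z respectively. -/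
open MeasureTheory ProbabilityTheory Set
open scoped ENNReal NNReal

/-- The exponentially tilted (Esscher-transformed) version of a distribution `ν` on `ℝ` with
tilting parameter `z`: the measure with density `e^{-zx} / ∫ e^{-zy} dν(y)` with respect to
`ν`.  For a non-negative random variable `W` with law `ν`, this is exactly the law of `W_z`,
whose CDF is `F_{W_z}(t) = E[1_{0 ≤ W ≤ t} e^{-zW}] / L_W(z)`. -/
noncomputable def tilt (ν : Measure ℝ) (z : ℝ) : Measure ℝ :=
  ν.withDensity fun x => ENNReal.ofReal (Real.exp (-(z * x)) / ∫ y, Real.exp (-(z * y)) ∂ν)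


lemma my_prod_withDensity {α β : Type*} [MeasurableSpace α] [MeasurableSpace β]
    (μ : Measure α) (ν : Measure β) [SigmaFinite μ] [SigmaFinite ν]
    {f : α → ℝ≥0∞} {g : β → ℝ≥0∞} (hf : Measurable f) (hg : Measurable g)
    [SigmaFinite (μ.withDensity f)] [SigmaFinite (ν.withDensity g)] :
    (μ.withDensity f).prod (ν.withDensity g)
      = (μ.prod ν).withDensity fun p => f p.1 * g p.2 := by
  refine Measure.prod_eq fun s t hs ht => ?_
  rw [withDensity_apply _ (hs.prod ht), ← Measure.prod_restrict,
    lintegral_prod_mul (hf.aemeasurable) (hg.aemeasurable),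
    withDensity_apply _ hs, withDensity_apply _ ht]

lemma my_integral_withDensity {α : Type*} [MeasurableSpace α] (μ : Measure α) {f : α → ℝ}
    (hf : Measurable f) (hfnn : ∀ x, 0 ≤ f x) (g : α → ℝ) :
    ∫ x, g x ∂(μ.withDensity fun x => ENNReal.ofReal (f x)) = ∫ x, f x * g x ∂μ := by
  have : (fun x => ENNReal.ofReal (f x)) = fun x => ((f x).toNNReal : ℝ≥0∞) := rfl
  rw [this, integral_withDensity_eq_integral_smul (by measurability) g]
  congr 1; ext x
  simp [NNReal.smul_def, Real.coe_toNNReal _ (hfnn x)]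

lemma tilt_facts {Ω : Type*} [MeasurableSpace Ω] {Ω' : Type*} [MeasurableSpace Ω']
    (P : Measure Ω) [IsProbabilityMeasure P] (P' : Measure Ω') [IsProbabilityMeasure P']
    (W : Ω → ℝ) (hWm : Measurable W) (hWnn : ∀ ω, 0 ≤ W ω)
    (hWnd : ¬ ∃ c : ℝ, ∀ᵐ ω ∂P, W ω = c)
    {z : ℝ} (hz : 0 < z) (Wz : Ω' → ℝ) (hWzm : Measurable Wz)
    (hWz : Measure.map Wz P' = tilt (Measure.map W P) z)
    (hWzint : Integrable Wz P') :
    0 < ∫ ω, Real.exp (-(z * W ω)) ∂P ∧ 0 < ∫ ω', Wz ω' ∂P' := by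
  have hem : Measurable fun ω => Real.exp (-(z * W ω)) :=
    Real.measurable_exp.comp ((measurable_const.mul hWm).neg)
  have hLint : Integrable (fun ω => Real.exp (-(z * W ω))) P := by
    refine (integrable_const (1:ℝ)).mono' hem.aestronglyMeasurable ?_
    filter_upwards with ω
    rw [Real.norm_eq_abs, abs_of_pos (Real.exp_pos _)]
    exact Real.exp_le_one_iff.2 (by nlinarith [hWnn ω])
  have hLpos : 0 < ∫ ω, Real.exp (-(z * W ω)) ∂P := by
    rw [integral_pos_iff_support_of_nonneg_ae
      (Filter.Eventually.of_forall fun ω => (Real.exp_pos _).le) hLint]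
    have : Function.support (fun ω => Real.exp (-(z * W ω))) = univ := by
      ext ω; simp [Function.mem_support, (Real.exp_pos _).ne']
    rw [this]; simp
  refine ⟨hLpos, ?_⟩
  set μW := Measure.map W P with hμW
  have hLW : (∫ y, Real.exp (-(z * y)) ∂μW) = ∫ ω, Real.exp (-(z * W ω)) ∂P := by
    rw [hμW]
    exact integral_map hWm.aemeasurable
      (Real.measurable_exp.comp ((measurable_const.mul measurable_id).neg)).aestronglyMeasurable
  have hdm : Measurable fun x : ℝ =>
      ENNReal.ofReal (Real.exp (-(z * x)) / ∫ y, Real.exp (-(z * y)) ∂μW) :=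
    ENNReal.measurable_ofReal.comp
      ((Real.measurable_exp.comp ((measurable_const.mul measurable_id).neg)).div_const _)
  have hμWIio : μW (Iio 0) = 0 := by
    rw [hμW, Measure.map_apply hWm measurableSet_Iio]
    have : W ⁻¹' Iio 0 = ∅ :=
      eq_empty_of_forall_notMem fun ω h => absurd h (not_lt.2 (hWnn ω))
    simp [this]
  have hμWIoi : 0 < μW (Ioi 0) := by
    rcases eq_or_lt_of_le (zero_le : 0 ≤ μW (Ioi 0)) with h | h
    · exfalso
      apply hWnd
      refine ⟨0, ?_⟩
      have h0 : P (W ⁻¹' Ioi 0) = 0 := by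
        rw [hμW, Measure.map_apply hWm measurableSet_Ioi] at h; exact h.symm
      have : {ω | ¬ W ω = 0} ⊆ W ⁻¹' Ioi 0 := by
        intro ω hω
        exact lt_of_le_of_ne (hWnn ω) (Ne.symm hω)
      exact measure_mono_null this h0
    · exact h
  -- Wz is a.e. nonnegative
  have hnn : ∀ᵐ ω' ∂P', 0 ≤ Wz ω' := by
    have h0 : P' (Wz ⁻¹' Iio 0) = 0 := by
      have h1 := Measure.map_apply (μ := P') hWzm (measurableSet_Iio (a := (0:ℝ)))
      rw [hWz] at h1
      rw [← h1]
      unfold tilt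
      rw [withDensity_apply _ measurableSet_Iio, Measure.restrict_eq_zero.2 hμWIio]
      simp
    rw [ae_iff]
    refine measure_mono_null ?_ h0
    intro ω hω
    simpa [not_le] using hω
  rw [integral_pos_iff_support_of_nonneg_ae hnn hWzint]
  have hsub : Wz ⁻¹' Ioi 0 ⊆ Function.support Wz := fun ω h => ne_of_gt h
  refine lt_of_lt_of_le ?_ (measure_mono hsub)
  have hmap : P' (Wz ⁻¹' Ioi 0) = tilt μW z (Ioi 0) := by
    rw [← hWz, Measure.map_apply hWzm measurableSet_Ioi]
  rw [hmap]
  unfold tilt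
  rw [withDensity_apply _ measurableSet_Ioi, lintegral_pos_iff_support hdm]
  have hsupp : Function.support (fun x : ℝ =>
      ENNReal.ofReal (Real.exp (-(z * x)) / ∫ y, Real.exp (-(z * y)) ∂μW)) = univ := by
    ext x
    simp only [Function.mem_support, mem_univ, iff_true, ne_eq]
    intro hcon
    rw [ENNReal.ofReal_eq_zero] at hcon
    have : 0 < Real.exp (-(z * x)) / ∫ y, Real.exp (-(z * y)) ∂μW :=
      div_pos (Real.exp_pos _) (by rw [hLW]; exact hLpos)
    linarith
  rw [hsupp, Measure.restrict_apply_univ]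
  exact hμWIoi


set_option maxHeartbeats 1000000 in
/-- Lemma 3.1. Let `W, Y, Z` be independent, non-degenerate, non-negative
random variables, `a, b, c ≥ 0`, `z > 0`, and assume all Laplace transforms and expectations
involved exist and are finite. Then
`E[|aW + bY - cZ| e^{-z(W+Y+Z)}] = L_W(z) L_Y(z) L_Z(z) (a E[W_z] + b E[Y_z] + c E[Z_z])
  G(aW_z + bY_z, cZ_z)`,
where `W_z, Y_z, Z_z` are independent random variables distributed as the exponential
tiltings of `W, Y, Z`, and `G(Y₁,Y₂) = E|Y₁-Y₂| / (E[Y₁] + E[Y₂])` is the normalized mean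
absolute difference. -/
theorem tilting_lemma
    {Ω : Type*} {mΩ : MeasurableSpace Ω} (P : Measure Ω) [IsProbabilityMeasure P]
    {Ω' : Type*} {mΩ' : MeasurableSpace Ω'} (P' : Measure Ω') [IsProbabilityMeasure P']
    (W Y Z : Ω → ℝ)
    (hWm : Measurable W) (hYm : Measurable Y) (hZm : Measurable Z)
    (hWnn : ∀ ω, 0 ≤ W ω) (hYnn : ∀ ω, 0 ≤ Y ω) (hZnn : ∀ ω, 0 ≤ Z ω)
    (hWnd : ¬ ∃ c : ℝ, ∀ᵐ ω ∂P, W ω = c)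
    (hYnd : ¬ ∃ c : ℝ, ∀ᵐ ω ∂P, Y ω = c)
    (hZnd : ¬ ∃ c : ℝ, ∀ᵐ ω ∂P, Z ω = c)
    (hindep : iIndepFun ![W, Y, Z] P)
    (a b c : ℝ) (ha : 0 ≤ a) (hb : 0 ≤ b) (hc : 0 ≤ c)
    (z : ℝ) (hz : 0 < z)
    (Wz Yz Zz : Ω' → ℝ)
    (hWzm : Measurable Wz) (hYzm : Measurable Yz) (hZzm : Measurable Zz)
    (hindep' : iIndepFun ![Wz, Yz, Zz] P')
    (hWz : Measure.map Wz P' = tilt (Measure.map W P) z)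
    (hYz : Measure.map Yz P' = tilt (Measure.map Y P) z)
    (hZz : Measure.map Zz P' = tilt (Measure.map Z P) z)
    -- all expectations involved are assumed to exist and be finite:
    (hint : Integrable
      (fun ω => |a * W ω + b * Y ω - c * Z ω| * Real.exp (-(z * (W ω + Y ω + Z ω)))) P)
    (hWzint : Integrable Wz P') (hYzint : Integrable Yz P') (hZzint : Integrable Zz P')
    (habs : Integrable (fun ω' => |a * Wz ω' + b * Yz ω' - c * Zz ω'|) P') :
    ∫ ω, |a * W ω + b * Y ω - c * Z ω| * Real.exp (-(z * (W ω + Y ω + Z ω))) ∂P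
      = (∫ ω, Real.exp (-(z * W ω)) ∂P) * (∫ ω, Real.exp (-(z * Y ω)) ∂P)
          * (∫ ω, Real.exp (-(z * Z ω)) ∂P)
        * (a * (∫ ω', Wz ω' ∂P') + b * (∫ ω', Yz ω' ∂P') + c * (∫ ω', Zz ω' ∂P'))
        * ((∫ ω', |(a * Wz ω' + b * Yz ω') - c * Zz ω'| ∂P')
            / ((∫ ω', a * Wz ω' + b * Yz ω' ∂P') + ∫ ω', c * Zz ω' ∂P')) := by
  obtain ⟨hLW, hEW⟩ := tilt_facts P P' W hWm hWnn hWnd hz Wz hWzm hWz hWzint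
  obtain ⟨hLY, hEY⟩ := tilt_facts P P' Y hYm hYnn hYnd hz Yz hYzm hYz hYzint
  obtain ⟨hLZ, hEZ⟩ := tilt_facts P P' Z hZm hZnn hZnd hz Zz hZzm hZz hZzint
  set LW := ∫ ω, Real.exp (-(z * W ω)) ∂P with hLWdef
  set LY := ∫ ω, Real.exp (-(z * Y ω)) ∂P with hLYdef
  set LZ := ∫ ω, Real.exp (-(z * Z ω)) ∂P with hLZdef
  set EW := ∫ ω', Wz ω' ∂P' with hEWdef
  set EY := ∫ ω', Yz ω' ∂P' with hEYdef
  set EZ := ∫ ω', Zz ω' ∂P' with hEZdef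
  set μW := Measure.map W P with hμWdef
  set μY := Measure.map Y P with hμYdef
  set μZ := Measure.map Z P with hμZdef
  -- laplace transforms as integrals over the laws
  have heme : Measurable fun y : ℝ => Real.exp (-(z * y)) :=
    Real.measurable_exp.comp ((measurable_const.mul measurable_id).neg)
  have hLWeq : (∫ y, Real.exp (-(z * y)) ∂μW) = LW := by
    rw [hμWdef]; exact integral_map hWm.aemeasurable heme.aestronglyMeasurable
  have hLYeq : (∫ y, Real.exp (-(z * y)) ∂μY) = LY := by
    rw [hμYdef]; exact integral_map hYm.aemeasurable heme.aestronglyMeasurable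
  have hLZeq : (∫ y, Real.exp (-(z * y)) ∂μZ) = LZ := by
    rw [hμZdef]; exact integral_map hZm.aemeasurable heme.aestronglyMeasurable
  -- probability instances on tilted laws
  haveI iW : IsProbabilityMeasure (tilt μW z) := hWz ▸ Measure.isProbabilityMeasure_map hWzm.aemeasurable
  haveI iY : IsProbabilityMeasure (tilt μY z) := hYz ▸ Measure.isProbabilityMeasure_map hYzm.aemeasurable
  haveI iZ : IsProbabilityMeasure (tilt μZ z) := hZz ▸ Measure.isProbabilityMeasure_map hZzm.aemeasurable
  -- joint laws
  have hmeas : ∀ i, Measurable (![W, Y, Z] i) := by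
    intro i; fin_cases i <;> assumption
  have hmeas' : ∀ i, Measurable (![Wz, Yz, Zz] i) := by
    intro i; fin_cases i <;> assumption
  have hYZ : Measure.map (fun ω => (Y ω, Z ω)) P = μY.prod μZ := by
    have h := hindep.indepFun (show (1 : Fin 3) ≠ 2 by decide)
    simp only [Matrix.cons_val_one, Matrix.head_cons, Matrix.cons_val_two, Matrix.tail_cons] at h
    exact (indepFun_iff_map_prod_eq_prod_map_map hYm.aemeasurable hZm.aemeasurable).mp h
  have hT : Measure.map (fun ω => (W ω, (Y ω, Z ω))) P = μW.prod (μY.prod μZ) := by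
    have h := (hindep.indepFun_prodMk hmeas 1 2 0 (by decide) (by decide)).symm
    simp only [Matrix.cons_val_one, Matrix.head_cons, Matrix.cons_val_two, Matrix.tail_cons,
      Matrix.cons_val_zero] at h
    rw [(indepFun_iff_map_prod_eq_prod_map_map hWm.aemeasurable
      (hYm.prodMk hZm).aemeasurable).mp h, hYZ]
  have hYZ' : Measure.map (fun ω' => (Yz ω', Zz ω')) P' = (tilt μY z).prod (tilt μZ z) := by
    have h := hindep'.indepFun (show (1 : Fin 3) ≠ 2 by decide)
    simp only [Matrix.cons_val_one, Matrix.head_cons, Matrix.cons_val_two, Matrix.tail_cons] at h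
    rw [(indepFun_iff_map_prod_eq_prod_map_map hYzm.aemeasurable hZzm.aemeasurable).mp h,
      hYz, hZz]
  have hT' : Measure.map (fun ω' => (Wz ω', (Yz ω', Zz ω'))) P'
      = (tilt μW z).prod ((tilt μY z).prod (tilt μZ z)) := by
    have h := (hindep'.indepFun_prodMk hmeas' 1 2 0 (by decide) (by decide)).symm
    simp only [Matrix.cons_val_one, Matrix.head_cons, Matrix.cons_val_two, Matrix.tail_cons,
      Matrix.cons_val_zero] at h
    rw [(indepFun_iff_map_prod_eq_prod_map_map hWzm.aemeasurable
      (hYzm.prodMk hZzm).aemeasurable).mp h, hWz, hYZ']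
  -- the product of the tilted laws as a density w.r.t. the product law
  haveI sY : SigmaFinite (μY.withDensity fun x =>
      ENNReal.ofReal (Real.exp (-(z * x)) / ∫ y, Real.exp (-(z * y)) ∂μY)) :=
    (inferInstance : SigmaFinite (tilt μY z))
  haveI sZ : SigmaFinite (μZ.withDensity fun x =>
      ENNReal.ofReal (Real.exp (-(z * x)) / ∫ y, Real.exp (-(z * y)) ∂μZ)) :=
    (inferInstance : SigmaFinite (tilt μZ z))
  haveI sW : SigmaFinite (μW.withDensity fun x =>
      ENNReal.ofReal (Real.exp (-(z * x)) / ∫ y, Real.exp (-(z * y)) ∂μW)) :=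
    (inferInstance : SigmaFinite (tilt μW z))
  have hdm : ∀ (r : ℝ), Measurable fun x : ℝ => ENNReal.ofReal (Real.exp (-(z * x)) / r) :=
    fun r => ENNReal.measurable_ofReal.comp (heme.div_const r)
  have hinner : (tilt μY z).prod (tilt μZ z) = (μY.prod μZ).withDensity fun p =>
      ENNReal.ofReal (Real.exp (-(z * p.1)) / LY) * ENNReal.ofReal (Real.exp (-(z * p.2)) / LZ) := by
    show (μY.withDensity _).prod (μZ.withDensity _) = _
    rw [my_prod_withDensity μY μZ (hdm _) (hdm _), hLYeq, hLZeq]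
  haveI sYZ : SigmaFinite ((tilt μY z).prod (tilt μZ z)) := inferInstance
  have htilt3 : (tilt μW z).prod ((tilt μY z).prod (tilt μZ z))
      = (μW.prod (μY.prod μZ)).withDensity fun p => ENNReal.ofReal
          ((Real.exp (-(z * p.1)) / LW) * ((Real.exp (-(z * p.2.1)) / LY)
            * (Real.exp (-(z * p.2.2)) / LZ))) := by
    rw [hinner]
    haveI : SigmaFinite ((μY.prod μZ).withDensity fun p =>
        ENNReal.ofReal (Real.exp (-(z * p.1)) / LY)
          * ENNReal.ofReal (Real.exp (-(z * p.2)) / LZ)) := by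
      rw [← hinner]; infer_instance
    show (μW.withDensity _).prod _ = _
    rw [hLWeq, my_prod_withDensity (f := fun x => ENNReal.ofReal (Real.exp (-(z * x)) / LW))
      (g := fun p : ℝ × ℝ => ENNReal.ofReal (Real.exp (-(z * p.1)) / LY)
        * ENNReal.ofReal (Real.exp (-(z * p.2)) / LZ))
      μW (μY.prod μZ) (hdm _) (((hdm LY).comp measurable_fst).mul ((hdm LZ).comp measurable_snd))]
    congr 1
    ext p
    rw [ENNReal.ofReal_mul (by positivity), ENNReal.ofReal_mul (by positivity)]
  -- transfer the integrals to the product laws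
  have hGm : Measurable fun p : ℝ × ℝ × ℝ => |a * p.1 + b * p.2.1 - c * p.2.2| := by fun_prop
  have hFm : Measurable fun p : ℝ × ℝ × ℝ =>
      |a * p.1 + b * p.2.1 - c * p.2.2| * Real.exp (-(z * (p.1 + p.2.1 + p.2.2))) := by fun_prop
  have hLHS : ∫ ω, |a * W ω + b * Y ω - c * Z ω| * Real.exp (-(z * (W ω + Y ω + Z ω))) ∂P
      = ∫ p, |a * p.1 + b * p.2.1 - c * p.2.2|
          * Real.exp (-(z * (p.1 + p.2.1 + p.2.2))) ∂(μW.prod (μY.prod μZ)) := by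
    rw [← hT, integral_map (hWm.prodMk (hYm.prodMk hZm)).aemeasurable
      hFm.aestronglyMeasurable]
  have hN : ∫ ω', |a * Wz ω' + b * Yz ω' - c * Zz ω'| ∂P'
      = (LW * (LY * LZ))⁻¹
        * ∫ ω, |a * W ω + b * Y ω - c * Z ω| * Real.exp (-(z * (W ω + Y ω + Z ω))) ∂P := by
    have h1 : ∫ ω', |a * Wz ω' + b * Yz ω' - c * Zz ω'| ∂P'
        = ∫ p, |a * p.1 + b * p.2.1 - c * p.2.2| ∂((tilt μW z).prod
            ((tilt μY z).prod (tilt μZ z))) := by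
      rw [← hT', integral_map (hWzm.prodMk (hYzm.prodMk hZzm)).aemeasurable
        hGm.aestronglyMeasurable]
    rw [h1, htilt3, my_integral_withDensity _ (by fun_prop) (fun p => by positivity), hLHS,
      ← integral_const_mul]
    congr 1
    ext p
    have he : Real.exp (-(z * (p.1 + p.2.1 + p.2.2)))
        = Real.exp (-(z * p.1)) * (Real.exp (-(z * p.2.1)) * Real.exp (-(z * p.2.2))) := by
      rw [← Real.exp_add, ← Real.exp_add]; ring_nf
    rw [he]
    field_simp
  -- rewrite the denominator
  have hDeq : ((∫ ω', a * Wz ω' + b * Yz ω' ∂P') + ∫ ω', c * Zz ω' ∂P')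
      = a * EW + b * EY + c * EZ := by
    rw [integral_add (hWzint.const_mul a) (hYzint.const_mul b), integral_const_mul,
      integral_const_mul, integral_const_mul]
  rw [hDeq, hN]
  by_cases habc : a = 0 ∧ b = 0 ∧ c = 0
  · obtain ⟨rfl, rfl, rfl⟩ := habc
    simp only [zero_mul, zero_add, add_zero, sub_zero, abs_zero, mul_zero, integral_zero]
  · have hD : 0 < a * EW + b * EY + c * EZ := by
      rcases ha.lt_or_eq with ha' | ha'
      · have : 0 < a * EW := mul_pos ha' hEW
        nlinarith [mul_nonneg hb hEY.le, mul_nonneg hc hEZ.le]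
      · rcases hb.lt_or_eq with hb' | hb'
        · have : 0 < b * EY := mul_pos hb' hEY
          nlinarith [mul_nonneg ha hEW.le, mul_nonneg hc hEZ.le]
        · rcases hc.lt_or_eq with hc' | hc'
          · have : 0 < c * EZ := mul_pos hc' hEZ
            nlinarith [mul_nonneg ha hEW.le, mul_nonneg hb hEY.le]
          · exact absurd ⟨ha'.symm, hb'.symm, hc'.symm⟩ habc
    field_simp
end
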